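/- arXiv:1404.6800 — 6 statements merged into one kernel-verified Lean document; each statement's English description precedes it below -/
import Mathlib

section
/- For every odd integer n ≥ 7, there exists a quasi-skew starter in Z_n; that is, a set of (n-1)/2 unordered pairs {x_i, y_i} of elements of Z_n such that the elements x_1,…,x_{(n-1)/2}, y_1,…,y_{(n-1)/2} are exactly the nonzero elements of Z_n, and the multiset {±(x_i + y_i) : 1 ≤ i ≤ (n-1)/2} is exactly the set of nonzero elements of Z_n. -/
/-- The multiset of all nonzero elements of `ZMod n`, each appearing exactly once. -/
def nonzeroZMod (n : ℕ) : Multiset (ZMod n) :=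
  (Multiset.range (n - 1)).map (fun z => ((z + 1 : ℕ) : ZMod n))

/-- A quasi-skew starter in `Z_n`, given as a multiset `P` of (ordered representatives of)
unordered pairs `{x_i, y_i}`: the entries `x_i, y_i` are exactly the nonzero elements of
`Z_n`, and the multiset `{±(x_i + y_i)}` is exactly the set of nonzero elements of `Z_n`. -/
def IsQuasiSkewStarter (n : ℕ) (P : Multiset (ZMod n × ZMod n)) : Prop :=
  (P.map Prod.fst + P.map Prod.snd) = nonzeroZMod n ∧
  (P.map (fun p => p.1 + p.2) + P.map (fun p => -(p.1 + p.2))) = nonzeroZMod n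

namespace QSS

def ap (n s d L : ℕ) : Multiset (ZMod n) :=
  (Multiset.range L).map (fun t => ((s + d * t : ℕ) : ZMod n))

def F (n lo L : ℕ) : Multiset (ZMod n × ZMod n) :=
  (Multiset.range L).map (fun t => (((lo + 2 * t : ℕ) : ZMod n), ((lo + 2 * t + 1 : ℕ) : ZMod n)))

lemma ap_zero (n s d : ℕ) : ap n s d 0 = 0 := by simp [ap]

lemma ap_succ (n s d L : ℕ) :
    ap n s d (L + 1) = ap n s d L + {((s + d * L : ℕ) : ZMod n)} := by
  simp only [ap, Multiset.range_succ, Multiset.map_cons]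
  rw [← Multiset.singleton_add]
  exact add_comm _ _

lemma mrange_succ' (L : ℕ) :
    Multiset.range (L + 1) = 0 ::ₘ (Multiset.range L).map (· + 1) := by
  rw [← Multiset.coe_range, ← Multiset.coe_range, List.range_succ_eq_map]
  simp [Nat.succ_eq_add_one]

lemma ap_one (n s d : ℕ) : ap n s d 1 = {((s : ℕ) : ZMod n)} := by
  simp [ap]

lemma ap_concat (n s s' d A B C : ℕ) (hs : s' = s + d * A) (hC : C = A + B) :
    ap n s d A + ap n s' d B = ap n s d C := by
  subst hs hC
  induction B with
  | zero => simp [ap_zero]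
  | succ B ih =>
      have h1 : s + d * A + d * B = s + d * (A + B) := by ring
      rw [ap_succ, h1, show A + (B + 1) = (A + B) + 1 by ring, ap_succ, ← ih]
      abel

lemma ap_glueE (n s s' d e L M : ℕ) (hs : s' = s + d) (he : e = 2 * d) (hM : M = 2 * L) :
    ap n s e L + ap n s' e L = ap n s d M := by
  subst hs he hM
  induction L with
  | zero => simp [ap_zero]
  | succ L ih =>
      have h1 : s + 2 * d * L = s + d * (2 * L) := by ring
      have h2 : s + d + 2 * d * L = s + d * (2 * L + 1) := by ring
      rw [ap_succ, ap_succ, h1, h2, show 2 * (L + 1) = (2 * L + 1) + 1 by ring,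
        ap_succ, ap_succ, ← ih]
      abel

lemma ap_glueO (n s s' d e L L' M : ℕ) (hs : s' = s + d) (he : e = 2 * d)
    (hL : L = L' + 1) (hM : M = 2 * L' + 1) :
    ap n s e L + ap n s' e L' = ap n s d M := by
  subst hs he hL hM
  have h1 : s + 2 * d * L' = s + d * (2 * L') := by ring
  rw [ap_succ, h1, ap_succ, ← ap_glueE n s (s + d) d (2 * d) L' (2 * L') rfl rfl rfl]
  abel

lemma range_rev {α : Type*} (g : ℕ → α) (L : ℕ) :
    (Multiset.range L).map (fun t => g (L - 1 - t)) = (Multiset.range L).map g := by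
  induction L generalizing g with
  | zero => simp
  | succ L ih =>
      calc (Multiset.range (L + 1)).map (fun t => g (L + 1 - 1 - t))
          = (0 ::ₘ (Multiset.range L).map (· + 1)).map (fun t => g (L + 1 - 1 - t)) := by
            rw [← mrange_succ']
        _ = g L ::ₘ (Multiset.range L).map (fun t => g (L - 1 - t)) := by
            simp only [Multiset.map_cons, Multiset.map_map]
            rw [show L + 1 - 1 - 0 = L by omega]
            congr 1
            apply Multiset.map_congr rfl
            intro t ht
            rw [Multiset.mem_range] at ht
            simp only [Function.comp_apply]
            congr 1
            omega
        _ = g L ::ₘ (Multiset.range L).map g := by rw [ih]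
        _ = (Multiset.range (L + 1)).map g := by rw [Multiset.range_succ, Multiset.map_cons]

lemma F_fst (n lo L : ℕ) : (F n lo L).map Prod.fst = ap n lo 2 L := by
  simp [F, ap, Multiset.map_map]

lemma F_snd (n lo L : ℕ) : (F n lo L).map Prod.snd = ap n (lo + 1) 2 L := by
  simp only [F, ap, Multiset.map_map]
  apply Multiset.map_congr rfl
  intro t _
  simp only [Function.comp_apply]
  congr 1
  ring

lemma natCast_reduce (n x y : ℕ) (h : x = y + n) : ((x : ℕ) : ZMod n) = ((y : ℕ) : ZMod n) := by
  subst h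
  push_cast [ZMod.natCast_self]
  ring

lemma neg_natCast (n x y N : ℕ) (hN : N % n = 0) (h : x + y = N) :
    -((x : ℕ) : ZMod n) = ((y : ℕ) : ZMod n) := by
  have h0 : ((x + y : ℕ) : ZMod n) = 0 := by
    rw [h]
    exact (ZMod.natCast_eq_zero_iff _ _).mpr (Nat.dvd_of_mod_eq_zero hN)
  push_cast at h0
  linear_combination -h0

lemma F_sum (n lo L c : ℕ) (h : 2 * lo + 1 = c ∨ 2 * lo + 1 = c + n) :
    (F n lo L).map (fun p => p.1 + p.2) = ap n c 4 L := by
  simp only [F, ap, Multiset.map_map]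
  apply Multiset.map_congr rfl
  intro t _
  simp only [Function.comp_apply]
  rw [← Nat.cast_add]
  rcases h with h | h
  · congr 1; omega
  · exact natCast_reduce n _ _ (by omega)

lemma F_negsum (n lo L b N : ℕ) (hN : N % n = 0)
    (hb : L = 0 ∨ 2 * lo + 1 + b + 4 * (L - 1) = N) :
    (F n lo L).map (fun p => -(p.1 + p.2)) = ap n b 4 L := by
  rcases hb with hb | hb
  · subst hb; simp [F, ap]
  have step1 : (F n lo L).map (fun p => -(p.1 + p.2)) =
      (Multiset.range L).map (fun t => ((b + 4 * (L - 1 - t) : ℕ) : ZMod n)) := by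
    simp only [F, Multiset.map_map]
    apply Multiset.map_congr rfl
    intro t ht
    rw [Multiset.mem_range] at ht
    simp only [Function.comp_apply]
    rw [← Nat.cast_add]
    exact neg_natCast n _ _ N hN (by omega)
  rw [step1, range_rev (g := fun t => ((b + 4 * t : ℕ) : ZMod n)) L]
  rfl

lemma nonzero_eq_ap (n : ℕ) : nonzeroZMod n = ap n 1 1 (n - 1) := by
  simp only [nonzeroZMod, ap]
  apply Multiset.map_congr rfl
  intro t _
  congr 1
  omega

end QSS

open QSS in
/-- For every odd integer `n ≥ 7` there exists a quasi-skew starter in `Z_n`. -/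
theorem exists_quasiSkewStarter (n : ℕ) (hn : 7 ≤ n) (hodd : Odd n) :
    ∃ P : Multiset (ZMod n × ZMod n), IsQuasiSkewStarter n P := by
  obtain ⟨c, hc⟩ := hodd
  by_cases h7 : n = 7
  · subst h7
    exact ⟨{((4 : ZMod 7), (5 : ZMod 7)), ((1 : ZMod 7), (3 : ZMod 7)), ((2 : ZMod 7), (6 : ZMod 7))},
      by decide, by decide⟩
  set k := n / 8 with hkdef
  have hk : 1 ≤ k := by omega
  have h8 : n = 8 * k + 1 ∨ n = 8 * k + 3 ∨ n = 8 * k + 5 ∨ n = 8 * k + 7 := by omega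
  rcases h8 with hn8 | hn8 | hn8 | hn8
  · -- case n ≡ 1 [mod 8]
    refine ⟨QSS.F n (2) (k - 1) + QSS.F n (2 * k + 1) (k) + QSS.F n (4 * k + 2) (k) + QSS.F n (6 * k + 3) (k - 1) + {(((1 : ℕ) : ZMod n), ((4 * k + 1 : ℕ) : ZMod n))} + {(((2 * k : ℕ) : ZMod n), ((6 * k + 2 : ℕ) : ZMod n))}, ?_, ?_⟩
    · simp only [Multiset.map_add, Multiset.map_singleton, QSS.F_fst, QSS.F_snd]
      rw [← QSS.ap_one n (1) 1, ← QSS.ap_one n (2 * k) 1, ← QSS.ap_one n (4 * k + 1) 1, ← QSS.ap_one n (6 * k + 2) 1]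
      have hI1 : QSS.ap n (2) 2 (k - 1) + QSS.ap n (2 + 1) 2 (k - 1) = QSS.ap n (2) 1 (2 * k - 2) :=
        QSS.ap_glueE n (2) (2 + 1) 1 2 (k - 1) (2 * k - 2) (by omega) (by omega) (by omega)
      have hI2 : QSS.ap n (2 * k + 1) 2 (k) + QSS.ap n (2 * k + 1 + 1) 2 (k) = QSS.ap n (2 * k + 1) 1 (2 * k) :=
        QSS.ap_glueE n (2 * k + 1) (2 * k + 1 + 1) 1 2 (k) (2 * k) (by omega) (by omega) (by omega)
      have hI3 : QSS.ap n (4 * k + 2) 2 (k) + QSS.ap n (4 * k + 2 + 1) 2 (k) = QSS.ap n (4 * k + 2) 1 (2 * k) :=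
        QSS.ap_glueE n (4 * k + 2) (4 * k + 2 + 1) 1 2 (k) (2 * k) (by omega) (by omega) (by omega)
      have hI4 : QSS.ap n (6 * k + 3) 2 (k - 1) + QSS.ap n (6 * k + 3 + 1) 2 (k - 1) = QSS.ap n (6 * k + 3) 1 (2 * k - 2) :=
        QSS.ap_glueE n (6 * k + 3) (6 * k + 3 + 1) 1 2 (k - 1) (2 * k - 2) (by omega) (by omega) (by omega)
      have hc1 : QSS.ap n 1 1 (1) + QSS.ap n (2) 1 (2 * k - 2) = QSS.ap n 1 1 (2 * k - 1) :=
        QSS.ap_concat n 1 (2) 1 (1) (2 * k - 2) (2 * k - 1) (by omega) (by omega)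
      have hc2 : QSS.ap n 1 1 (2 * k - 1) + QSS.ap n (2 * k) 1 (1) = QSS.ap n 1 1 (2 * k) :=
        QSS.ap_concat n 1 (2 * k) 1 (2 * k - 1) (1) (2 * k) (by omega) (by omega)
      have hc3 : QSS.ap n 1 1 (2 * k) + QSS.ap n (2 * k + 1) 1 (2 * k) = QSS.ap n 1 1 (4 * k) :=
        QSS.ap_concat n 1 (2 * k + 1) 1 (2 * k) (2 * k) (4 * k) (by omega) (by omega)
      have hc4 : QSS.ap n 1 1 (4 * k) + QSS.ap n (4 * k + 1) 1 (1) = QSS.ap n 1 1 (4 * k + 1) :=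
        QSS.ap_concat n 1 (4 * k + 1) 1 (4 * k) (1) (4 * k + 1) (by omega) (by omega)
      have hc5 : QSS.ap n 1 1 (4 * k + 1) + QSS.ap n (4 * k + 2) 1 (2 * k) = QSS.ap n 1 1 (6 * k + 1) :=
        QSS.ap_concat n 1 (4 * k + 2) 1 (4 * k + 1) (2 * k) (6 * k + 1) (by omega) (by omega)
      have hc6 : QSS.ap n 1 1 (6 * k + 1) + QSS.ap n (6 * k + 2) 1 (1) = QSS.ap n 1 1 (6 * k + 2) :=
        QSS.ap_concat n 1 (6 * k + 2) 1 (6 * k + 1) (1) (6 * k + 2) (by omega) (by omega)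
      have hc7 : QSS.ap n 1 1 (6 * k + 2) + QSS.ap n (6 * k + 3) 1 (2 * k - 2) = QSS.ap n 1 1 (8 * k) :=
        QSS.ap_concat n 1 (6 * k + 3) 1 (6 * k + 2) (2 * k - 2) (8 * k) (by omega) (by omega)
      rw [QSS.nonzero_eq_ap, show n - 1 = 8 * k by omega, ← hc7, ← hc6, ← hc5, ← hc4, ← hc3, ← hc2, ← hc1, ← hI1, ← hI2, ← hI3, ← hI4]
      abel
    · simp only [Multiset.map_add, Multiset.map_singleton]
      rw [QSS.F_sum n (2) (k - 1) (5) (by omega),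
        QSS.F_sum n (2 * k + 1) (k) (4 * k + 3) (by omega),
        QSS.F_sum n (4 * k + 2) (k) (4) (by omega),
        QSS.F_sum n (6 * k + 3) (k - 1) (4 * k + 6) (by omega),
        QSS.F_negsum n (2) (k - 1) (4 * k + 4) (n) (Nat.mod_self n) (by omega),
        QSS.F_negsum n (2 * k + 1) (k) (2) (n) (Nat.mod_self n) (by omega),
        QSS.F_negsum n (4 * k + 2) (k) (4 * k + 1) (2 * n) (by simp [Nat.mul_mod_right]) (by omega),
        QSS.F_negsum n (6 * k + 3) (k - 1) (3) (2 * n) (by simp [Nat.mul_mod_right]) (by omega)]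
      rw [show ((1 : ℕ) : ZMod n) + ((4 * k + 1 : ℕ) : ZMod n) = ((4 * k + 2 : ℕ) : ZMod n) by push_cast; ring]
      rw [show ((2 * k : ℕ) : ZMod n) + ((6 * k + 2 : ℕ) : ZMod n) = ((8 * k + 2 : ℕ) : ZMod n) by push_cast; ring]
      rw [show -((4 * k + 2 : ℕ) : ZMod n) = ((4 * k - 1 : ℕ) : ZMod n) from QSS.neg_natCast n _ _ (n) (Nat.mod_self n) (by omega)]
      rw [show -((8 * k + 2 : ℕ) : ZMod n) = ((8 * k : ℕ) : ZMod n) from QSS.neg_natCast n _ _ (2 * n) (by simp [Nat.mul_mod_right]) (by omega)]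
      rw [show ((8 * k + 2 : ℕ) : ZMod n) = ((1 : ℕ) : ZMod n) from QSS.natCast_reduce n _ _ (by omega)]
      rw [← QSS.ap_one n (4 * k + 2) 4, ← QSS.ap_one n (1) 4, ← QSS.ap_one n (4 * k - 1) 4, ← QSS.ap_one n (8 * k) 4]
      have hO1a := QSS.ap_concat n (1) (5) 4 (1) (k - 1) (k) (by omega) (by omega)
      have hO1b := QSS.ap_concat n (1) (4 * k + 1) 4 (k) (k) (2 * k) (by omega) (by omega)
      have hO3a := QSS.ap_concat n (3) (4 * k - 1) 4 (k - 1) (1) (k) (by omega) (by omega)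
      have hO3b := QSS.ap_concat n (3) (4 * k + 3) 4 (k) (k) (2 * k) (by omega) (by omega)
      have hE2a := QSS.ap_concat n (2) (4 * k + 2) 4 (k) (1) (k + 1) (by omega) (by omega)
      have hE2b := QSS.ap_concat n (2) (4 * k + 6) 4 (k + 1) (k - 1) (2 * k) (by omega) (by omega)
      have hE0a := QSS.ap_concat n (4) (4 * k + 4) 4 (k) (k - 1) (2 * k - 1) (by omega) (by omega)
      have hE0b := QSS.ap_concat n (4) (8 * k) 4 (2 * k - 1) (1) (2 * k) (by omega) (by omega)
      have hgO := QSS.ap_glueE n (1) (3) 2 4 (2 * k) (4 * k) (by omega) (by omega) (by omega)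
      have hgE := QSS.ap_glueE n (2) (4) 2 4 (2 * k) (4 * k) (by omega) (by omega) (by omega)
      have hgF := QSS.ap_glueE n (1) (2) 1 2 (4 * k) (8 * k) (by omega) (by omega) (by omega)
      rw [QSS.nonzero_eq_ap, show n - 1 = 8 * k by omega, ← hgF, ← hgE, ← hgO, ← hE0b, ← hE0a, ← hE2b, ← hE2a, ← hO3b, ← hO3a, ← hO1b, ← hO1a]
      abel
  · -- case n ≡ 3 [mod 8]
    refine ⟨QSS.F n (2) (k - 1) + QSS.F n (2 * k + 1) (k) + QSS.F n (4 * k + 2) (k) + QSS.F n (6 * k + 3) (k) + {(((1 : ℕ) : ZMod n), ((4 * k + 1 : ℕ) : ZMod n))} + {(((2 * k : ℕ) : ZMod n), ((6 * k + 2 : ℕ) : ZMod n))}, ?_, ?_⟩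
    · simp only [Multiset.map_add, Multiset.map_singleton, QSS.F_fst, QSS.F_snd]
      rw [← QSS.ap_one n (1) 1, ← QSS.ap_one n (2 * k) 1, ← QSS.ap_one n (4 * k + 1) 1, ← QSS.ap_one n (6 * k + 2) 1]
      have hI1 : QSS.ap n (2) 2 (k - 1) + QSS.ap n (2 + 1) 2 (k - 1) = QSS.ap n (2) 1 (2 * k - 2) :=
        QSS.ap_glueE n (2) (2 + 1) 1 2 (k - 1) (2 * k - 2) (by omega) (by omega) (by omega)
      have hI2 : QSS.ap n (2 * k + 1) 2 (k) + QSS.ap n (2 * k + 1 + 1) 2 (k) = QSS.ap n (2 * k + 1) 1 (2 * k) :=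
        QSS.ap_glueE n (2 * k + 1) (2 * k + 1 + 1) 1 2 (k) (2 * k) (by omega) (by omega) (by omega)
      have hI3 : QSS.ap n (4 * k + 2) 2 (k) + QSS.ap n (4 * k + 2 + 1) 2 (k) = QSS.ap n (4 * k + 2) 1 (2 * k) :=
        QSS.ap_glueE n (4 * k + 2) (4 * k + 2 + 1) 1 2 (k) (2 * k) (by omega) (by omega) (by omega)
      have hI4 : QSS.ap n (6 * k + 3) 2 (k) + QSS.ap n (6 * k + 3 + 1) 2 (k) = QSS.ap n (6 * k + 3) 1 (2 * k) :=
        QSS.ap_glueE n (6 * k + 3) (6 * k + 3 + 1) 1 2 (k) (2 * k) (by omega) (by omega) (by omega)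
      have hc1 : QSS.ap n 1 1 (1) + QSS.ap n (2) 1 (2 * k - 2) = QSS.ap n 1 1 (2 * k - 1) :=
        QSS.ap_concat n 1 (2) 1 (1) (2 * k - 2) (2 * k - 1) (by omega) (by omega)
      have hc2 : QSS.ap n 1 1 (2 * k - 1) + QSS.ap n (2 * k) 1 (1) = QSS.ap n 1 1 (2 * k) :=
        QSS.ap_concat n 1 (2 * k) 1 (2 * k - 1) (1) (2 * k) (by omega) (by omega)
      have hc3 : QSS.ap n 1 1 (2 * k) + QSS.ap n (2 * k + 1) 1 (2 * k) = QSS.ap n 1 1 (4 * k) :=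
        QSS.ap_concat n 1 (2 * k + 1) 1 (2 * k) (2 * k) (4 * k) (by omega) (by omega)
      have hc4 : QSS.ap n 1 1 (4 * k) + QSS.ap n (4 * k + 1) 1 (1) = QSS.ap n 1 1 (4 * k + 1) :=
        QSS.ap_concat n 1 (4 * k + 1) 1 (4 * k) (1) (4 * k + 1) (by omega) (by omega)
      have hc5 : QSS.ap n 1 1 (4 * k + 1) + QSS.ap n (4 * k + 2) 1 (2 * k) = QSS.ap n 1 1 (6 * k + 1) :=
        QSS.ap_concat n 1 (4 * k + 2) 1 (4 * k + 1) (2 * k) (6 * k + 1) (by omega) (by omega)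
      have hc6 : QSS.ap n 1 1 (6 * k + 1) + QSS.ap n (6 * k + 2) 1 (1) = QSS.ap n 1 1 (6 * k + 2) :=
        QSS.ap_concat n 1 (6 * k + 2) 1 (6 * k + 1) (1) (6 * k + 2) (by omega) (by omega)
      have hc7 : QSS.ap n 1 1 (6 * k + 2) + QSS.ap n (6 * k + 3) 1 (2 * k) = QSS.ap n 1 1 (8 * k + 2) :=
        QSS.ap_concat n 1 (6 * k + 3) 1 (6 * k + 2) (2 * k) (8 * k + 2) (by omega) (by omega)
      rw [QSS.nonzero_eq_ap, show n - 1 = 8 * k + 2 by omega, ← hc7, ← hc6, ← hc5, ← hc4, ← hc3, ← hc2, ← hc1, ← hI1, ← hI2, ← hI3, ← hI4]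
      abel
    · simp only [Multiset.map_add, Multiset.map_singleton]
      rw [QSS.F_sum n (2) (k - 1) (5) (by omega),
        QSS.F_sum n (2 * k + 1) (k) (4 * k + 3) (by omega),
        QSS.F_sum n (4 * k + 2) (k) (2) (by omega),
        QSS.F_sum n (6 * k + 3) (k) (4 * k + 4) (by omega),
        QSS.F_negsum n (2) (k - 1) (4 * k + 6) (n) (Nat.mod_self n) (by omega),
        QSS.F_negsum n (2 * k + 1) (k) (4) (n) (Nat.mod_self n) (by omega),
        QSS.F_negsum n (4 * k + 2) (k) (4 * k + 5) (2 * n) (by simp [Nat.mul_mod_right]) (by omega),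
        QSS.F_negsum n (6 * k + 3) (k) (3) (2 * n) (by simp [Nat.mul_mod_right]) (by omega)]
      rw [show ((1 : ℕ) : ZMod n) + ((4 * k + 1 : ℕ) : ZMod n) = ((4 * k + 2 : ℕ) : ZMod n) by push_cast; ring]
      rw [show ((2 * k : ℕ) : ZMod n) + ((6 * k + 2 : ℕ) : ZMod n) = ((8 * k + 2 : ℕ) : ZMod n) by push_cast; ring]
      rw [show -((4 * k + 2 : ℕ) : ZMod n) = ((4 * k + 1 : ℕ) : ZMod n) from QSS.neg_natCast n _ _ (n) (Nat.mod_self n) (by omega)]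
      rw [show -((8 * k + 2 : ℕ) : ZMod n) = ((1 : ℕ) : ZMod n) from QSS.neg_natCast n _ _ (n) (Nat.mod_self n) (by omega)]
      rw [← QSS.ap_one n (4 * k + 2) 4, ← QSS.ap_one n (8 * k + 2) 4, ← QSS.ap_one n (4 * k + 1) 4, ← QSS.ap_one n (1) 4]
      have hO1a := QSS.ap_concat n (1) (5) 4 (1) (k - 1) (k) (by omega) (by omega)
      have hO1b := QSS.ap_concat n (1) (4 * k + 1) 4 (k) (1) (k + 1) (by omega) (by omega)
      have hO1c := QSS.ap_concat n (1) (4 * k + 5) 4 (k + 1) (k) (2 * k + 1) (by omega) (by omega)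
      have hO3a := QSS.ap_concat n (3) (4 * k + 3) 4 (k) (k) (2 * k) (by omega) (by omega)
      have hE2a := QSS.ap_concat n (2) (4 * k + 2) 4 (k) (1) (k + 1) (by omega) (by omega)
      have hE2b := QSS.ap_concat n (2) (4 * k + 6) 4 (k + 1) (k - 1) (2 * k) (by omega) (by omega)
      have hE2c := QSS.ap_concat n (2) (8 * k + 2) 4 (2 * k) (1) (2 * k + 1) (by omega) (by omega)
      have hE0a := QSS.ap_concat n (4) (4 * k + 4) 4 (k) (k) (2 * k) (by omega) (by omega)
      have hgO := QSS.ap_glueO n (1) (3) 2 4 (2 * k + 1) (2 * k) (4 * k + 1) (by omega) (by omega) (by omega) (by omega)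
      have hgE := QSS.ap_glueO n (2) (4) 2 4 (2 * k + 1) (2 * k) (4 * k + 1) (by omega) (by omega) (by omega) (by omega)
      have hgF := QSS.ap_glueE n (1) (2) 1 2 (4 * k + 1) (8 * k + 2) (by omega) (by omega) (by omega)
      rw [QSS.nonzero_eq_ap, show n - 1 = 8 * k + 2 by omega, ← hgF, ← hgE, ← hgO, ← hE0a, ← hE2c, ← hE2b, ← hE2a, ← hO3a, ← hO1c, ← hO1b, ← hO1a]
      abel
  · -- case n ≡ 5 [mod 8]
    refine ⟨QSS.F n (2) (k - 1) + QSS.F n (2 * k + 1) (k + 1) + QSS.F n (4 * k + 4) (k) + QSS.F n (6 * k + 5) (k) + {(((1 : ℕ) : ZMod n), ((4 * k + 3 : ℕ) : ZMod n))} + {(((2 * k : ℕ) : ZMod n), ((6 * k + 4 : ℕ) : ZMod n))}, ?_, ?_⟩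
    · simp only [Multiset.map_add, Multiset.map_singleton, QSS.F_fst, QSS.F_snd]
      rw [← QSS.ap_one n (1) 1, ← QSS.ap_one n (2 * k) 1, ← QSS.ap_one n (4 * k + 3) 1, ← QSS.ap_one n (6 * k + 4) 1]
      have hI1 : QSS.ap n (2) 2 (k - 1) + QSS.ap n (2 + 1) 2 (k - 1) = QSS.ap n (2) 1 (2 * k - 2) :=
        QSS.ap_glueE n (2) (2 + 1) 1 2 (k - 1) (2 * k - 2) (by omega) (by omega) (by omega)
      have hI2 : QSS.ap n (2 * k + 1) 2 (k + 1) + QSS.ap n (2 * k + 1 + 1) 2 (k + 1) = QSS.ap n (2 * k + 1) 1 (2 * k + 2) :=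
        QSS.ap_glueE n (2 * k + 1) (2 * k + 1 + 1) 1 2 (k + 1) (2 * k + 2) (by omega) (by omega) (by omega)
      have hI3 : QSS.ap n (4 * k + 4) 2 (k) + QSS.ap n (4 * k + 4 + 1) 2 (k) = QSS.ap n (4 * k + 4) 1 (2 * k) :=
        QSS.ap_glueE n (4 * k + 4) (4 * k + 4 + 1) 1 2 (k) (2 * k) (by omega) (by omega) (by omega)
      have hI4 : QSS.ap n (6 * k + 5) 2 (k) + QSS.ap n (6 * k + 5 + 1) 2 (k) = QSS.ap n (6 * k + 5) 1 (2 * k) :=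
        QSS.ap_glueE n (6 * k + 5) (6 * k + 5 + 1) 1 2 (k) (2 * k) (by omega) (by omega) (by omega)
      have hc1 : QSS.ap n 1 1 (1) + QSS.ap n (2) 1 (2 * k - 2) = QSS.ap n 1 1 (2 * k - 1) :=
        QSS.ap_concat n 1 (2) 1 (1) (2 * k - 2) (2 * k - 1) (by omega) (by omega)
      have hc2 : QSS.ap n 1 1 (2 * k - 1) + QSS.ap n (2 * k) 1 (1) = QSS.ap n 1 1 (2 * k) :=
        QSS.ap_concat n 1 (2 * k) 1 (2 * k - 1) (1) (2 * k) (by omega) (by omega)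
      have hc3 : QSS.ap n 1 1 (2 * k) + QSS.ap n (2 * k + 1) 1 (2 * k + 2) = QSS.ap n 1 1 (4 * k + 2) :=
        QSS.ap_concat n 1 (2 * k + 1) 1 (2 * k) (2 * k + 2) (4 * k + 2) (by omega) (by omega)
      have hc4 : QSS.ap n 1 1 (4 * k + 2) + QSS.ap n (4 * k + 3) 1 (1) = QSS.ap n 1 1 (4 * k + 3) :=
        QSS.ap_concat n 1 (4 * k + 3) 1 (4 * k + 2) (1) (4 * k + 3) (by omega) (by omega)
      have hc5 : QSS.ap n 1 1 (4 * k + 3) + QSS.ap n (4 * k + 4) 1 (2 * k) = QSS.ap n 1 1 (6 * k + 3) :=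
        QSS.ap_concat n 1 (4 * k + 4) 1 (4 * k + 3) (2 * k) (6 * k + 3) (by omega) (by omega)
      have hc6 : QSS.ap n 1 1 (6 * k + 3) + QSS.ap n (6 * k + 4) 1 (1) = QSS.ap n 1 1 (6 * k + 4) :=
        QSS.ap_concat n 1 (6 * k + 4) 1 (6 * k + 3) (1) (6 * k + 4) (by omega) (by omega)
      have hc7 : QSS.ap n 1 1 (6 * k + 4) + QSS.ap n (6 * k + 5) 1 (2 * k) = QSS.ap n 1 1 (8 * k + 4) :=
        QSS.ap_concat n 1 (6 * k + 5) 1 (6 * k + 4) (2 * k) (8 * k + 4) (by omega) (by omega)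
      rw [QSS.nonzero_eq_ap, show n - 1 = 8 * k + 4 by omega, ← hc7, ← hc6, ← hc5, ← hc4, ← hc3, ← hc2, ← hc1, ← hI1, ← hI2, ← hI3, ← hI4]
      abel
    · simp only [Multiset.map_add, Multiset.map_singleton]
      rw [QSS.F_sum n (2) (k - 1) (5) (by omega),
        QSS.F_sum n (2 * k + 1) (k + 1) (4 * k + 3) (by omega),
        QSS.F_sum n (4 * k + 4) (k) (4) (by omega),
        QSS.F_sum n (6 * k + 5) (k) (4 * k + 6) (by omega),
        QSS.F_negsum n (2) (k - 1) (4 * k + 8) (n) (Nat.mod_self n) (by omega),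
        QSS.F_negsum n (2 * k + 1) (k + 1) (2) (n) (Nat.mod_self n) (by omega),
        QSS.F_negsum n (4 * k + 4) (k) (4 * k + 5) (2 * n) (by simp [Nat.mul_mod_right]) (by omega),
        QSS.F_negsum n (6 * k + 5) (k) (3) (2 * n) (by simp [Nat.mul_mod_right]) (by omega)]
      rw [show ((1 : ℕ) : ZMod n) + ((4 * k + 3 : ℕ) : ZMod n) = ((4 * k + 4 : ℕ) : ZMod n) by push_cast; ring]
      rw [show ((2 * k : ℕ) : ZMod n) + ((6 * k + 4 : ℕ) : ZMod n) = ((8 * k + 4 : ℕ) : ZMod n) by push_cast; ring]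
      rw [show -((4 * k + 4 : ℕ) : ZMod n) = ((4 * k + 1 : ℕ) : ZMod n) from QSS.neg_natCast n _ _ (n) (Nat.mod_self n) (by omega)]
      rw [show -((8 * k + 4 : ℕ) : ZMod n) = ((1 : ℕ) : ZMod n) from QSS.neg_natCast n _ _ (n) (Nat.mod_self n) (by omega)]
      rw [← QSS.ap_one n (4 * k + 4) 4, ← QSS.ap_one n (8 * k + 4) 4, ← QSS.ap_one n (4 * k + 1) 4, ← QSS.ap_one n (1) 4]
      have hO1a := QSS.ap_concat n (1) (5) 4 (1) (k - 1) (k) (by omega) (by omega)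
      have hO1b := QSS.ap_concat n (1) (4 * k + 1) 4 (k) (1) (k + 1) (by omega) (by omega)
      have hO1c := QSS.ap_concat n (1) (4 * k + 5) 4 (k + 1) (k) (2 * k + 1) (by omega) (by omega)
      have hO3a := QSS.ap_concat n (3) (4 * k + 3) 4 (k) (k + 1) (2 * k + 1) (by omega) (by omega)
      have hE2a := QSS.ap_concat n (2) (4 * k + 6) 4 (k + 1) (k) (2 * k + 1) (by omega) (by omega)
      have hE0a := QSS.ap_concat n (4) (4 * k + 4) 4 (k) (1) (k + 1) (by omega) (by omega)
      have hE0b := QSS.ap_concat n (4) (4 * k + 8) 4 (k + 1) (k - 1) (2 * k) (by omega) (by omega)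
      have hE0c := QSS.ap_concat n (4) (8 * k + 4) 4 (2 * k) (1) (2 * k + 1) (by omega) (by omega)
      have hgO := QSS.ap_glueE n (1) (3) 2 4 (2 * k + 1) (4 * k + 2) (by omega) (by omega) (by omega)
      have hgE := QSS.ap_glueE n (2) (4) 2 4 (2 * k + 1) (4 * k + 2) (by omega) (by omega) (by omega)
      have hgF := QSS.ap_glueE n (1) (2) 1 2 (4 * k + 2) (8 * k + 4) (by omega) (by omega) (by omega)
      rw [QSS.nonzero_eq_ap, show n - 1 = 8 * k + 4 by omega, ← hgF, ← hgE, ← hgO, ← hE0c, ← hE0b, ← hE0a, ← hE2a, ← hO3a, ← hO1c, ← hO1b, ← hO1a]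
      abel
  · -- case n ≡ 7 [mod 8]
    refine ⟨QSS.F n (2) (k) + QSS.F n (2 * k + 3) (k) + QSS.F n (4 * k + 4) (k + 1) + QSS.F n (6 * k + 7) (k) + {(((1 : ℕ) : ZMod n), ((4 * k + 3 : ℕ) : ZMod n))} + {(((2 * k + 2 : ℕ) : ZMod n), ((6 * k + 6 : ℕ) : ZMod n))}, ?_, ?_⟩
    · simp only [Multiset.map_add, Multiset.map_singleton, QSS.F_fst, QSS.F_snd]
      rw [← QSS.ap_one n (1) 1, ← QSS.ap_one n (2 * k + 2) 1, ← QSS.ap_one n (4 * k + 3) 1, ← QSS.ap_one n (6 * k + 6) 1]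
      have hI1 : QSS.ap n (2) 2 (k) + QSS.ap n (2 + 1) 2 (k) = QSS.ap n (2) 1 (2 * k) :=
        QSS.ap_glueE n (2) (2 + 1) 1 2 (k) (2 * k) (by omega) (by omega) (by omega)
      have hI2 : QSS.ap n (2 * k + 3) 2 (k) + QSS.ap n (2 * k + 3 + 1) 2 (k) = QSS.ap n (2 * k + 3) 1 (2 * k) :=
        QSS.ap_glueE n (2 * k + 3) (2 * k + 3 + 1) 1 2 (k) (2 * k) (by omega) (by omega) (by omega)
      have hI3 : QSS.ap n (4 * k + 4) 2 (k + 1) + QSS.ap n (4 * k + 4 + 1) 2 (k + 1) = QSS.ap n (4 * k + 4) 1 (2 * k + 2) :=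
        QSS.ap_glueE n (4 * k + 4) (4 * k + 4 + 1) 1 2 (k + 1) (2 * k + 2) (by omega) (by omega) (by omega)
      have hI4 : QSS.ap n (6 * k + 7) 2 (k) + QSS.ap n (6 * k + 7 + 1) 2 (k) = QSS.ap n (6 * k + 7) 1 (2 * k) :=
        QSS.ap_glueE n (6 * k + 7) (6 * k + 7 + 1) 1 2 (k) (2 * k) (by omega) (by omega) (by omega)
      have hc1 : QSS.ap n 1 1 (1) + QSS.ap n (2) 1 (2 * k) = QSS.ap n 1 1 (2 * k + 1) :=
        QSS.ap_concat n 1 (2) 1 (1) (2 * k) (2 * k + 1) (by omega) (by omega)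
      have hc2 : QSS.ap n 1 1 (2 * k + 1) + QSS.ap n (2 * k + 2) 1 (1) = QSS.ap n 1 1 (2 * k + 2) :=
        QSS.ap_concat n 1 (2 * k + 2) 1 (2 * k + 1) (1) (2 * k + 2) (by omega) (by omega)
      have hc3 : QSS.ap n 1 1 (2 * k + 2) + QSS.ap n (2 * k + 3) 1 (2 * k) = QSS.ap n 1 1 (4 * k + 2) :=
        QSS.ap_concat n 1 (2 * k + 3) 1 (2 * k + 2) (2 * k) (4 * k + 2) (by omega) (by omega)
      have hc4 : QSS.ap n 1 1 (4 * k + 2) + QSS.ap n (4 * k + 3) 1 (1) = QSS.ap n 1 1 (4 * k + 3) :=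
        QSS.ap_concat n 1 (4 * k + 3) 1 (4 * k + 2) (1) (4 * k + 3) (by omega) (by omega)
      have hc5 : QSS.ap n 1 1 (4 * k + 3) + QSS.ap n (4 * k + 4) 1 (2 * k + 2) = QSS.ap n 1 1 (6 * k + 5) :=
        QSS.ap_concat n 1 (4 * k + 4) 1 (4 * k + 3) (2 * k + 2) (6 * k + 5) (by omega) (by omega)
      have hc6 : QSS.ap n 1 1 (6 * k + 5) + QSS.ap n (6 * k + 6) 1 (1) = QSS.ap n 1 1 (6 * k + 6) :=
        QSS.ap_concat n 1 (6 * k + 6) 1 (6 * k + 5) (1) (6 * k + 6) (by omega) (by omega)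
      have hc7 : QSS.ap n 1 1 (6 * k + 6) + QSS.ap n (6 * k + 7) 1 (2 * k) = QSS.ap n 1 1 (8 * k + 6) :=
        QSS.ap_concat n 1 (6 * k + 7) 1 (6 * k + 6) (2 * k) (8 * k + 6) (by omega) (by omega)
      rw [QSS.nonzero_eq_ap, show n - 1 = 8 * k + 6 by omega, ← hc7, ← hc6, ← hc5, ← hc4, ← hc3, ← hc2, ← hc1, ← hI1, ← hI2, ← hI3, ← hI4]
      abel
    · simp only [Multiset.map_add, Multiset.map_singleton]
      rw [QSS.F_sum n (2) (k) (5) (by omega),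
        QSS.F_sum n (2 * k + 3) (k) (4 * k + 7) (by omega),
        QSS.F_sum n (4 * k + 4) (k + 1) (2) (by omega),
        QSS.F_sum n (6 * k + 7) (k) (4 * k + 8) (by omega),
        QSS.F_negsum n (2) (k) (4 * k + 6) (n) (Nat.mod_self n) (by omega),
        QSS.F_negsum n (2 * k + 3) (k) (4) (n) (Nat.mod_self n) (by omega),
        QSS.F_negsum n (4 * k + 4) (k + 1) (4 * k + 5) (2 * n) (by simp [Nat.mul_mod_right]) (by omega),
        QSS.F_negsum n (6 * k + 7) (k) (3) (2 * n) (by simp [Nat.mul_mod_right]) (by omega)]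
      rw [show ((1 : ℕ) : ZMod n) + ((4 * k + 3 : ℕ) : ZMod n) = ((4 * k + 4 : ℕ) : ZMod n) by push_cast; ring]
      rw [show ((2 * k + 2 : ℕ) : ZMod n) + ((6 * k + 6 : ℕ) : ZMod n) = ((8 * k + 8 : ℕ) : ZMod n) by push_cast; ring]
      rw [show -((4 * k + 4 : ℕ) : ZMod n) = ((4 * k + 3 : ℕ) : ZMod n) from QSS.neg_natCast n _ _ (n) (Nat.mod_self n) (by omega)]
      rw [show -((8 * k + 8 : ℕ) : ZMod n) = ((8 * k + 6 : ℕ) : ZMod n) from QSS.neg_natCast n _ _ (2 * n) (by simp [Nat.mul_mod_right]) (by omega)]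
      rw [show ((8 * k + 8 : ℕ) : ZMod n) = ((1 : ℕ) : ZMod n) from QSS.natCast_reduce n _ _ (by omega)]
      rw [← QSS.ap_one n (4 * k + 4) 4, ← QSS.ap_one n (1) 4, ← QSS.ap_one n (4 * k + 3) 4, ← QSS.ap_one n (8 * k + 6) 4]
      have hO1a := QSS.ap_concat n (1) (5) 4 (1) (k) (k + 1) (by omega) (by omega)
      have hO1b := QSS.ap_concat n (1) (4 * k + 5) 4 (k + 1) (k + 1) (2 * k + 2) (by omega) (by omega)
      have hO3a := QSS.ap_concat n (3) (4 * k + 3) 4 (k) (1) (k + 1) (by omega) (by omega)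
      have hO3b := QSS.ap_concat n (3) (4 * k + 7) 4 (k + 1) (k) (2 * k + 1) (by omega) (by omega)
      have hE2a := QSS.ap_concat n (2) (4 * k + 6) 4 (k + 1) (k) (2 * k + 1) (by omega) (by omega)
      have hE2b := QSS.ap_concat n (2) (8 * k + 6) 4 (2 * k + 1) (1) (2 * k + 2) (by omega) (by omega)
      have hE0a := QSS.ap_concat n (4) (4 * k + 4) 4 (k) (1) (k + 1) (by omega) (by omega)
      have hE0b := QSS.ap_concat n (4) (4 * k + 8) 4 (k + 1) (k) (2 * k + 1) (by omega) (by omega)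
      have hgO := QSS.ap_glueO n (1) (3) 2 4 (2 * k + 2) (2 * k + 1) (4 * k + 3) (by omega) (by omega) (by omega) (by omega)
      have hgE := QSS.ap_glueO n (2) (4) 2 4 (2 * k + 2) (2 * k + 1) (4 * k + 3) (by omega) (by omega) (by omega) (by omega)
      have hgF := QSS.ap_glueE n (1) (2) 1 2 (4 * k + 3) (8 * k + 6) (by omega) (by omega) (by omega)
      rw [QSS.nonzero_eq_ap, show n - 1 = 8 * k + 6 by omega, ← hgF, ← hgE, ← hgO, ← hE0b, ← hE0a, ← hE2b, ← hE2a, ← hO3b, ← hO3a, ← hO1b, ← hO1a]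
      abel
end

section
/- For n = 2s+1 with s ≡ 0 (mod 8) and s ≥ 16, the following s pairs form a quasi-skew starter in Z_n: {i, i+s} for i ∈ [1, s/2−1] \ {s/8+1, s/4}; {i+s/2+1, i−s/2−1} for i ∈ [2, s/2−1] \ {3s/8+1}; together with the six pairs {s/2, s/2+1}, {5s/4, 3s/2}, {s/8+1, 15s/8+1}, {3s/2+1, 2s}, {s/4, s/2+2}, {7s/8+2, 9s/8+1}. -/
namespace QSS
lemma range2 (k : ℕ) : Multiset.range (2*k) =
    (Multiset.range k).map (fun x => 2*x) + (Multiset.range k).map (fun x => 2*x+1) := by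
  induction k with
  | zero => rfl
  | succ k ih =>
    have h : 2*(k+1) = (2*k) + 1 + 1 := by ring
    rw [h, Multiset.range_succ, Multiset.range_succ, ih, Multiset.range_succ]
    ext x
    simp [Multiset.count_cons]

/-- arithmetic progression c, c+1, ..., c+k-1 -/
def R (c k : ℕ) : Multiset ℕ := (Multiset.range k).map (fun x => x + c)
/-- arithmetic progression c, c+2, ..., c+2(k-1) -/
def R2 (c k : ℕ) : Multiset ℕ := (Multiset.range k).map (fun x => 2*x + c)

lemma Rsplit (c j k : ℕ) : R c (j + k) = R c j + R (c + j) k := by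
  unfold R
  rw [Multiset.range_add, Multiset.map_add, Multiset.map_map]
  congr 1
  exact Multiset.map_congr rfl (fun x _ => by simp [Function.comp]; omega)

lemma Rsplit' {c k : ℕ} (j m c' : ℕ) (h : k = j + m) (h2 : c + j = c') :
    R c k = R c j + R c' m := by subst h h2; exact Rsplit c j m

lemma Rone (c : ℕ) : R c 1 = {c} := by simp [R]

lemma R2split (c j k : ℕ) : R2 c (j + k) = R2 c j + R2 (c + 2*j) k := by
  unfold R2
  rw [Multiset.range_add, Multiset.map_add, Multiset.map_map]
  congr 1
  exact Multiset.map_congr rfl (fun x _ => by simp [Function.comp]; omega)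

lemma R2split' {c k : ℕ} (j m c' : ℕ) (h : k = j + m) (h2 : c + 2*j = c') :
    R2 c k = R2 c j + R2 c' m := by subst h h2; exact R2split c j m

lemma R2one (c : ℕ) : R2 c 1 = {c} := by simp [R2]

lemma Rshift (a b c k : ℕ) (h : a + b = c) :
    (R a k).map (fun x => x + b) = R c k := by
  unfold R; rw [Multiset.map_map]
  exact Multiset.map_congr rfl (fun x _ => by simp [Function.comp]; omega)

lemma Rmul2 (a b c k : ℕ) (h : 2*a + b = c) :
    (R a k).map (fun x => 2*x + b) = R2 c k := by
  unfold R R2; rw [Multiset.map_map]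
  exact Multiset.map_congr rfl (fun x _ => by simp [Function.comp]; omega)

lemma range_rev_s3 (k : ℕ) : (Multiset.range k).map (fun x => k - 1 - x) = Multiset.range k := by
  have hnd : ((Multiset.range k).map (fun x => k - 1 - x)).Nodup := by
    refine Multiset.Nodup.map_on ?_ (Multiset.nodup_range k)
    intro x hx y hy h
    rw [Multiset.mem_range] at hx hy; omega
  have hsub : ((Multiset.range k).map (fun x => k - 1 - x)) ⊆ Multiset.range k := by
    intro y hy
    rw [Multiset.mem_map] at hy
    obtain ⟨x, hx, rfl⟩ := hy
    rw [Multiset.mem_range] at hx ⊢; omega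
  refine Multiset.eq_of_le_of_card_le ((Multiset.le_iff_subset hnd).mpr hsub) ?_
  simp

lemma Rrev (a b c k : ℕ) (hk : 1 ≤ k) (hb : 2*(a+k-1) ≤ b) (h : c = b - 2*(a+k-1)) :
    (R a k).map (fun x => b - 2*x) = R2 c k := by
  unfold R R2
  rw [Multiset.map_map]
  conv_lhs => rw [← range_rev_s3 k, Multiset.map_map]
  refine Multiset.map_congr rfl (fun x hx => ?_)
  rw [Multiset.mem_range] at hx
  simp only [Function.comp]
  omega

lemma Rdouble (c k : ℕ) : R c (2*k) = R2 c k + R2 (c+1) k := by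
  unfold R R2
  rw [range2, Multiset.map_add, Multiset.map_map, Multiset.map_map]
  exact congrArg₂ (· + ·)
    (Multiset.map_congr rfl (fun x _ => by simp [Function.comp]; try ring))
    (Multiset.map_congr rfl (fun x _ => by simp [Function.comp]; try ring))

lemma iccVal (a b : ℕ) : (Finset.Icc a b).val = R a (b + 1 - a) := by
  rw [Nat.Icc_eq_range']
  show (↑(List.range' a (b+1-a)) : Multiset ℕ) = _
  rw [List.range'_eq_map_range, R,
    show Multiset.range (b+1-a) = ((List.range (b+1-a) : List ℕ) : Multiset ℕ) from rfl,
    Multiset.map_coe, Multiset.coe_eq_coe]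
  exact List.Perm.of_eq (List.map_congr_left (fun x _ => by omega))


lemma Rtwo (c : ℕ) : R c 2 = {c} + {c+1} := by
  rw [Rsplit' 1 1 (c+1) (by omega) rfl, Rone, Rone]

lemma Rthree (c : ℕ) : R c 3 = {c} + {c+1} + {c+2} := by
  rw [Rsplit' 1 2 (c+1) (by omega) rfl, Rone, Rtwo, show c+1+1 = c+2 from by omega]
  abel

lemma key1 (t : ℕ) (ht : 2 ≤ t) (M1 M2 : Multiset ℕ)
    (hM1 : M1 + ({t+1} + {2*t}) = R 1 (4*t-1))
    (hM2 : M2 + {3*t+1} = R 2 (4*t-2)) :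
    M1 + M1.map (fun i => i + 8*t) + M2.map (fun i => i + (4*t+1)) + M2.map (fun i => i + 12*t)
      + ({4*t} + {10*t} + {t+1} + {12*t+1} + {2*t} + {7*t+2})
      + ({4*t+1} + {12*t} + {15*t+1} + {16*t} + {4*t+2} + {9*t+1})
      = R 1 (16*t) := by
  have c1 : M1.map (fun i => i + 8*t) + ({9*t+1} + {10*t}) = R (8*t+1) (4*t-1) := by
    have h := congrArg (Multiset.map (fun i => i + 8*t)) hM1
    rw [Multiset.map_add, Multiset.map_add, Multiset.map_singleton, Multiset.map_singleton,
      Rshift 1 (8*t) (8*t+1) _ (by ring), show t+1+8*t = 9*t+1 from by omega,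
      show 2*t+8*t = 10*t from by omega] at h
    exact h
  have c2 : M2.map (fun i => i + (4*t+1)) + {7*t+2} = R (4*t+3) (4*t-2) := by
    have h := congrArg (Multiset.map (fun i => i + (4*t+1))) hM2
    rw [Multiset.map_add, Multiset.map_singleton,
      Rshift 2 (4*t+1) (4*t+3) _ (by ring), show 3*t+1+(4*t+1) = 7*t+2 from by omega] at h
    exact h
  have c3 : M2.map (fun i => i + 12*t) + {15*t+1} = R (12*t+2) (4*t-2) := by
    have h := congrArg (Multiset.map (fun i => i + 12*t)) hM2
    rw [Multiset.map_add, Multiset.map_singleton,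
      Rshift 2 (12*t) (12*t+2) _ (by ring), show 3*t+1+12*t = 15*t+1 from by omega] at h
    exact h
  have e1 : R 1 (16*t) = R 1 (4*t-1) + R (4*t) (12*t+1) := Rsplit' _ _ _ (by omega) (by omega)
  have e2 : R (4*t) (12*t+1) = R (4*t) 3 + R (4*t+3) (12*t-2) := Rsplit' _ _ _ (by omega) (by omega)
  have e3 : R (4*t+3) (12*t-2) = R (4*t+3) (4*t-2) + R (8*t+1) (8*t) := Rsplit' _ _ _ (by omega) (by omega)
  have e4 : R (8*t+1) (8*t) = R (8*t+1) (4*t-1) + R (12*t) (4*t+1) := Rsplit' _ _ _ (by omega) (by omega)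
  have e5 : R (12*t) (4*t+1) = R (12*t) 2 + R (12*t+2) (4*t-1) := Rsplit' _ _ _ (by omega) (by omega)
  have e6 : R (12*t+2) (4*t-1) = R (12*t+2) (4*t-2) + R (16*t) 1 := Rsplit' _ _ _ (by omega) (by omega)
  have hdec : R 1 (16*t) = R 1 (4*t-1) + ({4*t} + {4*t+1} + {4*t+2}) + R (4*t+3) (4*t-2)
      + R (8*t+1) (4*t-1) + ({12*t} + {12*t+1}) + R (12*t+2) (4*t-2) + {16*t} := by
    rw [e1, e2, e3, e4, e5, e6, Rthree, Rtwo, Rone]; abel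
  refine add_right_cancel (b := ({t+1} + {2*t}) + ({9*t+1} + {10*t}) + {7*t+2} + {15*t+1}) ?_
  calc _ = (M1 + ({t+1} + {2*t})) + (M1.map (fun i => i + 8*t) + ({9*t+1} + {10*t}))
        + (M2.map (fun i => i + (4*t+1)) + {7*t+2}) + (M2.map (fun i => i + 12*t) + {15*t+1})
        + ({4*t} + {10*t} + {t+1} + {12*t+1} + {2*t} + {7*t+2})
        + ({4*t+1} + {12*t} + {15*t+1} + {16*t} + {4*t+2} + {9*t+1}) := by abel
    _ = _ := by rw [hM1, c1, c2, c3, hdec]; abel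

lemma key2 (t : ℕ) (ht : 2 ≤ t) (M1 M2 : Multiset ℕ)
    (hM1 : M1 + ({t+1} + {2*t}) = R 1 (4*t-1))
    (hM2 : M2 + {3*t+1} = R 2 (4*t-2)) :
    M1.map (fun i => 2*i + 8*t) + M2.map (fun i => 2*i)
      + ({8*t+1} + {6*t-1} + {1} + {12*t} + {6*t+2} + {2})
      + (M1.map (fun i => 8*t+1 - 2*i) + M2.map (fun i => 16*t+1 - 2*i)
      + ({8*t} + {10*t+2} + {16*t} + {4*t+1} + {10*t-1} + {16*t-1}))
      = R 1 (16*t) := by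
  have c1 : M1.map (fun i => 2*i + 8*t) + ({10*t+2} + {12*t}) = R2 (8*t+2) (4*t-1) := by
    have h := congrArg (Multiset.map (fun i => 2*i + 8*t)) hM1
    rw [Multiset.map_add, Multiset.map_add, Multiset.map_singleton, Multiset.map_singleton,
      Rmul2 1 (8*t) (8*t+2) _ (by ring), show 2*(t+1)+8*t = 10*t+2 from by omega,
      show 2*(2*t)+8*t = 12*t from by omega] at h
    exact h
  have c2 : M2.map (fun i => 2*i) + {6*t+2} = R2 4 (4*t-2) := by
    have h := congrArg (Multiset.map (fun i => 2*i + 0)) hM2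
    rw [Multiset.map_add, Multiset.map_singleton,
      Rmul2 2 0 4 _ (by ring), show 2*(3*t+1)+0 = 6*t+2 from by omega] at h
    have hmap : M2.map (fun i => 2*i) = M2.map (fun i => 2*i + 0) :=
      Multiset.map_congr rfl (fun x _ => by omega)
    rw [hmap]; exact h
  have c3 : M1.map (fun i => 8*t+1 - 2*i) + ({6*t-1} + {4*t+1}) = R2 3 (4*t-1) := by
    have h := congrArg (Multiset.map (fun i => 8*t+1 - 2*i)) hM1
    rw [Multiset.map_add, Multiset.map_add, Multiset.map_singleton, Multiset.map_singleton,
      Rrev 1 (8*t+1) 3 (4*t-1) (by omega) (by omega) (by omega),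
      show 8*t+1-2*(t+1) = 6*t-1 from by omega,
      show 8*t+1-2*(2*t) = 4*t+1 from by omega] at h
    exact h
  have c4 : M2.map (fun i => 16*t+1 - 2*i) + {10*t-1} = R2 (8*t+3) (4*t-2) := by
    have h := congrArg (Multiset.map (fun i => 16*t+1 - 2*i)) hM2
    rw [Multiset.map_add, Multiset.map_singleton,
      Rrev 2 (16*t+1) (8*t+3) (4*t-2) (by omega) (by omega) (by omega),
      show 16*t+1-2*(3*t+1) = 10*t-1 from by omega] at h
    exact h
  have o1 : R2 1 (8*t) = R2 1 1 + R2 3 (8*t-1) := R2split' _ _ _ (by omega) (by omega)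
  have o2 : R2 3 (8*t-1) = R2 3 (4*t-1) + R2 (8*t+1) (4*t) := R2split' _ _ _ (by omega) (by omega)
  have o3 : R2 (8*t+1) (4*t) = R2 (8*t+1) 1 + R2 (8*t+3) (4*t-1) := R2split' _ _ _ (by omega) (by omega)
  have o4 : R2 (8*t+3) (4*t-1) = R2 (8*t+3) (4*t-2) + R2 (16*t-1) 1 := R2split' _ _ _ (by omega) (by omega)
  have v1 : R2 2 (8*t) = R2 2 1 + R2 4 (8*t-1) := R2split' _ _ _ (by omega) (by omega)
  have v2 : R2 4 (8*t-1) = R2 4 (4*t-2) + R2 (8*t) (4*t+1) := R2split' _ _ _ (by omega) (by omega)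
  have v3 : R2 (8*t) (4*t+1) = R2 (8*t) 1 + R2 (8*t+2) (4*t) := R2split' _ _ _ (by omega) (by omega)
  have v4 : R2 (8*t+2) (4*t) = R2 (8*t+2) (4*t-1) + R2 (16*t) 1 := R2split' _ _ _ (by omega) (by omega)
  have hdec : R 1 (16*t) = ({1} + R2 3 (4*t-1) + {8*t+1} + R2 (8*t+3) (4*t-2) + {16*t-1})
      + ({2} + R2 4 (4*t-2) + {8*t} + R2 (8*t+2) (4*t-1) + {16*t}) := by
    conv_lhs => rw [show 16*t = 2*(8*t) from by ring, Rdouble]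
    rw [show (1:ℕ)+1 = 2 from rfl,
      o1, o2, o3, o4, v1, v2, v3, v4, R2one, R2one, R2one, R2one, R2one, R2one]
    abel
  refine add_right_cancel
    (b := ({10*t+2} + {12*t}) + {6*t+2} + ({6*t-1} + {4*t+1}) + {10*t-1}) ?_
  calc _ = (M1.map (fun i => 2*i + 8*t) + ({10*t+2} + {12*t}))
        + (M2.map (fun i => 2*i) + {6*t+2})
        + (M1.map (fun i => 8*t+1 - 2*i) + ({6*t-1} + {4*t+1}))
        + (M2.map (fun i => 16*t+1 - 2*i) + {10*t-1})
        + ({8*t+1} + {6*t-1} + {1} + {12*t} + {6*t+2} + {2})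
        + ({8*t} + {10*t+2} + {16*t} + {4*t+1} + {10*t-1} + {16*t-1}) := by abel
    _ = _ := by rw [c1, c2, c3, c4, hdec]; abel

end QSS

open QSS


/-- For `n = 2s+1` with `s ≡ 0 (mod 8)`, `s ≥ 16`, the pairs
`{i, i+s}` for `i ∈ [1, s/2−1] \ {s/8+1, s/4}`,
`{i+s/2+1, i−s/2−1}` for `i ∈ [2, s/2−1] \ {3s/8+1}`, together with
`{s/2, s/2+1}, {5s/4, 3s/2}, {s/8+1, 15s/8+1}, {3s/2+1, 2s}, {s/4, s/2+2}, {7s/8+2, 9s/8+1}`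
form a quasi-skew starter in `Z_{2s+1}`. -/
theorem quasiSkewStarter_of_eight_dvd (s : ℕ) (hs : 16 ≤ s) (h8 : s % 8 = 0) :
    IsQuasiSkewStarter (2 * s + 1)
      ((((Finset.Icc 1 (s / 2 - 1)) \ {s / 8 + 1, s / 4}).val.map
          (fun (i : ℕ) =>
            (((i : ℕ) : ZMod (2 * s + 1)), (((i + s : ℕ)) : ZMod (2 * s + 1))))) +
       (((Finset.Icc 2 (s / 2 - 1)) \ {3 * s / 8 + 1}).val.map
          (fun (i : ℕ) =>
            ((((i + s / 2 + 1 : ℕ)) : ZMod (2 * s + 1)),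
              ((i : ℕ) : ZMod (2 * s + 1)) - (((s / 2 + 1 : ℕ)) : ZMod (2 * s + 1))))) +
       ({(((s / 2 : ℕ) : ZMod (2 * s + 1)), ((s / 2 + 1 : ℕ) : ZMod (2 * s + 1))),
         (((5 * s / 4 : ℕ) : ZMod (2 * s + 1)), ((3 * s / 2 : ℕ) : ZMod (2 * s + 1))),
         (((s / 8 + 1 : ℕ) : ZMod (2 * s + 1)), ((15 * s / 8 + 1 : ℕ) : ZMod (2 * s + 1))),
         (((3 * s / 2 + 1 : ℕ) : ZMod (2 * s + 1)), ((2 * s : ℕ) : ZMod (2 * s + 1))),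
         (((s / 4 : ℕ) : ZMod (2 * s + 1)), ((s / 2 + 2 : ℕ) : ZMod (2 * s + 1))),
         (((7 * s / 8 + 2 : ℕ) : ZMod (2 * s + 1)), ((9 * s / 8 + 1 : ℕ) : ZMod (2 * s + 1)))} :
           Multiset (ZMod (2 * s + 1) × ZMod (2 * s + 1)))) := by
  obtain ⟨t, rfl⟩ : ∃ t, s = 8*t := ⟨s/8, by omega⟩
  have ht : 2 ≤ t := by omega
  rw [show 2*(8*t) = 16*t from by ring]
  simp only [show 8*t/2 = 4*t from by omega, show 8*t/8 = t from by omega,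
    show 8*t/4 = 2*t from by omega, show 3*(8*t)/8 = 3*t from by omega,
    show 5*(8*t)/4 = 10*t from by omega, show 15*(8*t)/8 = 15*t from by omega,
    show 3*(8*t)/2 = 12*t from by omega, show 7*(8*t)/8 = 7*t from by omega,
    show 9*(8*t)/8 = 9*t from by omega]
  have hn : ((16*t+1 : ℕ) : ZMod (16*t+1)) = 0 := ZMod.natCast_self _
  push_cast at hn
  have hIcc1 : (Finset.Icc 1 (4*t-1)).val = R 1 (4*t-1) := by
    rw [iccVal, show 4*t-1+1-1 = 4*t-1 from by omega]
  have hIcc2 : (Finset.Icc 2 (4*t-1)).val = R 2 (4*t-2) := by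
    rw [iccVal, show 4*t-1+1-2 = 4*t-2 from by omega]
  have hsub1 : ({t+1, 2*t} : Finset ℕ) ⊆ Finset.Icc 1 (4*t-1) := by
    intro x hx; simp only [Finset.mem_insert, Finset.mem_singleton] at hx
    rcases hx with rfl | rfl <;> (rw [Finset.mem_Icc]; omega)
  have hsub2 : ({3*t+1} : Finset ℕ) ⊆ Finset.Icc 2 (4*t-1) := by
    intro x hx; simp only [Finset.mem_singleton] at hx
    subst hx; rw [Finset.mem_Icc]; omega
  have hTval : ({t+1, 2*t} : Finset ℕ).val = {t+1} + {2*t} := by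
    rw [Finset.insert_val_of_notMem (by simp; omega)]
    rfl
  have hM1 : (Finset.Icc 1 (4*t-1) \ {t+1, 2*t}).val + ({t+1} + {2*t}) = R 1 (4*t-1) := by
    rw [← hIcc1, ← hTval, Finset.sdiff_val, tsub_add_cancel_of_le (Finset.val_le_iff.mpr hsub1)]
  have hM2 : (Finset.Icc 2 (4*t-1) \ {3*t+1}).val + {3*t+1} = R 2 (4*t-2) := by
    rw [← hIcc2, show ({3*t+1} : Multiset ℕ) = ({3*t+1} : Finset ℕ).val from rfl,
      Finset.sdiff_val, tsub_add_cancel_of_le (Finset.val_le_iff.mpr hsub2)]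
  refine ⟨?_, ?_⟩
  · simp only [Multiset.map_add, Multiset.map_map, Multiset.insert_eq_cons, Multiset.map_cons,
      Multiset.map_singleton, Function.comp, Prod.fst, Prod.snd]
    have p1 : Multiset.map (fun x : ℕ => (x : ZMod (16*t+1)))
        (Finset.Icc 1 (4*t-1) \ {t+1, 2*t}).val
        = Multiset.map Nat.cast (Finset.Icc 1 (4*t-1) \ {t+1, 2*t}).val := rfl
    have p2 : Multiset.map (fun x : ℕ => ((x + 8*t : ℕ) : ZMod (16*t+1)))
        (Finset.Icc 1 (4*t-1) \ {t+1, 2*t}).val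
        = Multiset.map Nat.cast ((Finset.Icc 1 (4*t-1) \ {t+1, 2*t}).val.map
            (fun i => i + 8*t)) := by
      rw [Multiset.map_map]; rfl
    have p3 : Multiset.map (fun x : ℕ => ((x + 4*t + 1 : ℕ) : ZMod (16*t+1)))
        (Finset.Icc 2 (4*t-1) \ {3*t+1}).val
        = Multiset.map Nat.cast ((Finset.Icc 2 (4*t-1) \ {3*t+1}).val.map
            (fun i => i + (4*t+1))) := by
      rw [Multiset.map_map]
      exact Multiset.map_congr rfl (fun x _ => by rw [Function.comp, add_assoc])
    have p4 : Multiset.map (fun x : ℕ => (x : ZMod (16*t+1)) - ((4*t+1 : ℕ) : ZMod (16*t+1)))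
        (Finset.Icc 2 (4*t-1) \ {3*t+1}).val
        = Multiset.map Nat.cast ((Finset.Icc 2 (4*t-1) \ {3*t+1}).val.map
            (fun i => i + 12*t)) := by
      rw [Multiset.map_map]
      refine Multiset.map_congr rfl (fun x _ => ?_)
      show (x : ZMod (16*t+1)) - ((4*t+1 : ℕ) : ZMod (16*t+1)) = ((x + 12*t : ℕ) : ZMod (16*t+1))
      push_cast
      linear_combination -hn
    have q1 : ((↑(4*t) : ZMod (16*t+1)) ::ₘ ↑(10*t) ::ₘ ↑(t+1) ::ₘ ↑(12*t+1) ::ₘ ↑(2*t)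
          ::ₘ {↑(7*t+2)})
        = Multiset.map Nat.cast ((4*t) ::ₘ (10*t) ::ₘ (t+1) ::ₘ (12*t+1) ::ₘ (2*t)
          ::ₘ ({7*t+2} : Multiset ℕ)) := by
      simp
    have q2 : ((↑(4*t+1) : ZMod (16*t+1)) ::ₘ ↑(12*t) ::ₘ ↑(15*t+1) ::ₘ ↑(16*t) ::ₘ ↑(4*t+2)
          ::ₘ {↑(9*t+1)})
        = Multiset.map Nat.cast ((4*t+1) ::ₘ (12*t) ::ₘ (15*t+1) ::ₘ (16*t) ::ₘ (4*t+2)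
          ::ₘ ({9*t+1} : Multiset ℕ)) := by
      simp
    have hz : nonzeroZMod (16*t+1) = Multiset.map Nat.cast (R 1 (16*t)) := by
      unfold nonzeroZMod
      rw [show 16*t+1-1 = 16*t from by omega]
      unfold QSS.R
      rw [Multiset.map_map]
      rfl
    rw [p1, p2, p3, p4, q1, q2, hz]
    simp only [← Multiset.map_add]
    refine congrArg _ ?_
    rw [← key1 t ht _ _ hM1 hM2]
    simp only [← Multiset.singleton_add]
    abel
  · simp only [Multiset.map_add, Multiset.map_map, Multiset.insert_eq_cons, Multiset.map_cons,
      Multiset.map_singleton, Function.comp, Prod.fst, Prod.snd]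
    have ps1 : Multiset.map (fun x : ℕ => (x : ZMod (16*t+1)) + ((x + 8*t : ℕ) : ZMod (16*t+1)))
        (Finset.Icc 1 (4*t-1) \ {t+1, 2*t}).val
        = Multiset.map Nat.cast ((Finset.Icc 1 (4*t-1) \ {t+1, 2*t}).val.map
            (fun i => 2*i + 8*t)) := by
      rw [Multiset.map_map]
      refine Multiset.map_congr rfl (fun x _ => ?_)
      show (x : ZMod (16*t+1)) + ((x + 8*t : ℕ) : ZMod (16*t+1)) = ((2*x + 8*t : ℕ) : ZMod (16*t+1))
      push_cast; ring
    have ps2 : Multiset.map (fun x : ℕ => ((x + 4*t + 1 : ℕ) : ZMod (16*t+1))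
          + ((x : ZMod (16*t+1)) - ((4*t+1 : ℕ) : ZMod (16*t+1))))
        (Finset.Icc 2 (4*t-1) \ {3*t+1}).val
        = Multiset.map Nat.cast ((Finset.Icc 2 (4*t-1) \ {3*t+1}).val.map
            (fun i => 2*i)) := by
      rw [Multiset.map_map]
      refine Multiset.map_congr rfl (fun x _ => ?_)
      show ((x + 4*t + 1 : ℕ) : ZMod (16*t+1)) + ((x : ZMod (16*t+1)) - ((4*t+1 : ℕ) : ZMod (16*t+1)))
        = ((2*x : ℕ) : ZMod (16*t+1))
      push_cast; ring
    have ns1 : Multiset.map (fun x : ℕ => -((x : ZMod (16*t+1)) + ((x + 8*t : ℕ) : ZMod (16*t+1))))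
        (Finset.Icc 1 (4*t-1) \ {t+1, 2*t}).val
        = Multiset.map Nat.cast ((Finset.Icc 1 (4*t-1) \ {t+1, 2*t}).val.map
            (fun i => 8*t+1 - 2*i)) := by
      rw [Multiset.map_map]
      refine Multiset.map_congr rfl (fun x hx => ?_)
      have hxb : 1 ≤ x ∧ x ≤ 4*t-1 :=
        Finset.mem_Icc.mp (Finset.mem_sdiff.mp (Finset.mem_val.mp hx)).1
      show -((x : ZMod (16*t+1)) + ((x + 8*t : ℕ) : ZMod (16*t+1)))
        = ((8*t+1 - 2*x : ℕ) : ZMod (16*t+1))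
      rw [Nat.cast_sub (by omega)]
      push_cast
      linear_combination -hn
    have ns2 : Multiset.map (fun x : ℕ => -(((x + 4*t + 1 : ℕ) : ZMod (16*t+1))
          + ((x : ZMod (16*t+1)) - ((4*t+1 : ℕ) : ZMod (16*t+1)))))
        (Finset.Icc 2 (4*t-1) \ {3*t+1}).val
        = Multiset.map Nat.cast ((Finset.Icc 2 (4*t-1) \ {3*t+1}).val.map
            (fun i => 16*t+1 - 2*i)) := by
      rw [Multiset.map_map]
      refine Multiset.map_congr rfl (fun x hx => ?_)
      have hxb : 2 ≤ x ∧ x ≤ 4*t-1 :=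
        Finset.mem_Icc.mp (Finset.mem_sdiff.mp (Finset.mem_val.mp hx)).1
      show -(((x + 4*t + 1 : ℕ) : ZMod (16*t+1))
          + ((x : ZMod (16*t+1)) - ((4*t+1 : ℕ) : ZMod (16*t+1))))
        = ((16*t+1 - 2*x : ℕ) : ZMod (16*t+1))
      rw [Nat.cast_sub (by omega)]
      push_cast
      linear_combination -hn
    have w1 : -((↑(4*t) : ZMod (16*t+1)) + ↑(4*t+1)) = ((8*t : ℕ) : ZMod (16*t+1)) := by
      push_cast; linear_combination -hn
    have w2 : -((↑(10*t) : ZMod (16*t+1)) + ↑(12*t)) = ((10*t+2 : ℕ) : ZMod (16*t+1)) := by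
      push_cast; linear_combination -2*hn
    have w3 : -((↑(t+1) : ZMod (16*t+1)) + ↑(15*t+1)) = ((16*t : ℕ) : ZMod (16*t+1)) := by
      push_cast; linear_combination -2*hn
    have w4 : -((↑(12*t+1) : ZMod (16*t+1)) + ↑(16*t)) = ((4*t+1 : ℕ) : ZMod (16*t+1)) := by
      push_cast; linear_combination -2*hn
    have w5 : -((↑(2*t) : ZMod (16*t+1)) + ↑(4*t+2)) = ((10*t-1 : ℕ) : ZMod (16*t+1)) := by
      rw [Nat.cast_sub (by omega)]; push_cast; linear_combination -hn
    have w6 : -((↑(7*t+2) : ZMod (16*t+1)) + ↑(9*t+1)) = ((16*t-1 : ℕ) : ZMod (16*t+1)) := by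
      rw [Nat.cast_sub (by omega)]; push_cast; linear_combination -2*hn
    have u1 : ((↑(4*t) : ZMod (16*t+1)) + ↑(4*t+1)) = ((8*t+1 : ℕ) : ZMod (16*t+1)) := by
      push_cast; ring
    have u2 : ((↑(10*t) : ZMod (16*t+1)) + ↑(12*t)) = ((6*t-1 : ℕ) : ZMod (16*t+1)) := by
      rw [Nat.cast_sub (by omega)]; push_cast; linear_combination hn
    have u3 : ((↑(t+1) : ZMod (16*t+1)) + ↑(15*t+1)) = ((1 : ℕ) : ZMod (16*t+1)) := by
      push_cast; linear_combination hn
    have u4 : ((↑(12*t+1) : ZMod (16*t+1)) + ↑(16*t)) = ((12*t : ℕ) : ZMod (16*t+1)) := by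
      push_cast; linear_combination hn
    have u5 : ((↑(2*t) : ZMod (16*t+1)) + ↑(4*t+2)) = ((6*t+2 : ℕ) : ZMod (16*t+1)) := by
      push_cast; ring
    have u6 : ((↑(7*t+2) : ZMod (16*t+1)) + ↑(9*t+1)) = ((2 : ℕ) : ZMod (16*t+1)) := by
      push_cast; linear_combination hn
    have hz : nonzeroZMod (16*t+1) = Multiset.map Nat.cast (R 1 (16*t)) := by
      unfold nonzeroZMod
      rw [show 16*t+1-1 = 16*t from by omega]
      unfold QSS.R
      rw [Multiset.map_map]
      rfl
    rw [ps1, ps2, ns1, ns2, w1, w2, w3, w4, w5, w6, u1, u2, u3, u4, u5, u6, hz]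
    have q1 : (((8*t+1 : ℕ) : ZMod (16*t+1)) ::ₘ ↑(6*t-1) ::ₘ ((1:ℕ) : ZMod (16*t+1)) ::ₘ ↑(12*t) ::ₘ ↑(6*t+2)
          ::ₘ {((2:ℕ) : ZMod (16*t+1))})
        = Multiset.map Nat.cast ((8*t+1) ::ₘ (6*t-1) ::ₘ 1 ::ₘ (12*t) ::ₘ (6*t+2)
          ::ₘ ({2} : Multiset ℕ)) := by
      simp
    have q2 : (((8*t : ℕ) : ZMod (16*t+1)) ::ₘ ↑(10*t+2) ::ₘ ↑(16*t) ::ₘ ↑(4*t+1) ::ₘ ↑(10*t-1)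
          ::ₘ {↑(16*t-1)})
        = Multiset.map Nat.cast ((8*t) ::ₘ (10*t+2) ::ₘ (16*t) ::ₘ (4*t+1) ::ₘ (10*t-1)
          ::ₘ ({16*t-1} : Multiset ℕ)) := by
      simp
    rw [q1, q2]
    simp only [← Multiset.map_add]
    refine congrArg _ ?_
    rw [← key2 t ht _ _ hM1 hM2]
    simp only [← Multiset.singleton_add]
    abel
end

section
/- There is no 3-SCHGDD of type (5, 1^4); that is, there do not exist 10 base blocks (3-subsets of I_5 × Z_4) on the point set I_5 × Z_4 with groups {i} × Z_4 and holes I_5 × {j}, whose development under adding 1 mod 4 to the second coordinate yields a 3-HGDD of type (5, 1^4). -/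
set_option maxRecDepth 100000


/-- The multiset of differences `Δ_{ij}(B)`: for each base block `b ∈ B`, all differences
`x − y` over ordered pairs of distinct points `(i,x), (j,y) ∈ b`. -/
def blockDelta {n M : ℕ} (B : Multiset (Finset (Fin n × ZMod M))) (i j : Fin n) :
    Multiset (ZMod M) :=
  B.bind (fun b =>
    ((b.val ×ˢ b.val).filter (fun p => p.1.1 = i ∧ p.2.1 = j ∧ p.1 ≠ p.2)).map
      (fun p => p.1.2 - p.2.2))

/-- The subgroup `S = {0, t, …, (m−1)t}` of `Z_{mt}` as a multiset. -/
def holeMultiples (m t : ℕ) : Multiset (ZMod (m * t)) :=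
  (Multiset.range m).map (fun c => ((c * t : ℕ) : ZMod (m * t)))

/-- The multiset `Z_{mt} \ S`, each element once. -/
def nonHoleDiffs (m t : ℕ) : Multiset (ZMod (m * t)) :=
  ((Multiset.range (m * t)).map (fun z => (z : ZMod (m * t)))).filter
    (fun z => z ∉ holeMultiples m t)

/-- A semi-cyclic `k`-HGDD of type `(n, m^t)`, given by its multiset `B` of base blocks
(`k`-subsets of `I_n × Z_{mt}`): developing by `+1` on second coordinates yields a
`k`-HGDD with groups `{i} × Z_{mt}` and holes `I_n × (S + l)`; equivalently,
`Δ_{ij}(B) = Z_{mt} \ S` for `i ≠ j` and `Δ_{ii}(B) = ∅`. -/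
def IsSCHGDD (k n m t : ℕ) (B : Multiset (Finset (Fin n × ZMod (m * t)))) : Prop :=
  (∀ b ∈ B, b.card = k) ∧
  (∀ i j : Fin n, i ≠ j → blockDelta B i j = nonHoleDiffs m t) ∧
  (∀ i : Fin n, blockDelta B i i = 0)


def ML : List Nat := [39584568181888,43982616789568,72568849565728,79165913039488,142937052678208,145136080127008,41505174200208343168,46116860218637819968,76092819321240191008,83010348348874956928,149879795607484268608,152185638616702140448,594943527373175277568,599555215590625911808,664118850654262263808,737905862123808882688,1182915486921227534848,1189833009351798827008,1217503264035724853248,1328183622900706705408,2363498096041337586688,2365803943448597774848,2398085807185674108928,2434979365684120649728,43521329506127200047595648,48357032784585716748386368,79789104094565800417427488,87042659012253575458979968,157160356549901930155475008,159578208189131188508819488,623805723497611605475330048,628641426776072321197278208,696341272674522618331660288,773712525129893931372249088,1240357891212848705493795328,1247611446130529883471874048,1276625665801420072422473728,1392682544484318509371752448,2478297930354109394270553088,2480715781993343050666213888,2514565704942614791038435328,2553251331170353017958432768,9908960482777151039693160448,9913796188361452565605531648,9981496066541674237618290688,10058867355890498497599766528,11142065407098299320555798528,12380006036517360367575236608,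19809760720883589350884384768,19817014268883748098291171328,19846028633822609337292423168,19962085401825148909259849728,20426315241432387579509997568,22283223529067702949278384128,39616650229110535902196154368,39619068085361451178972684288,39652918072874265620783300608,39691603772888909765744263168,40233203573688406631092584448,40852174773625479910546997248]

def TMask : Nat := 73946218900178680929032531680

def cellT : List (List Nat) := [[],[],[],[],[],[72568849565728,145136080127008,76092819321240191008,152185638616702140448,79789104094565800417427488,159578208189131188508819488],[43982616789568,142937052678208,46116860218637819968,149879795607484268608,48357032784585716748386368,157160356549901930155475008],[39584568181888,79165913039488,41505174200208343168,83010348348874956928,43521329506127200047595648,87042659012253575458979968],[],[43982616789568,79165913039488,1182915486921227534848,2365803943448597774848,1240357891212848705493795328,2480715781993343050666213888],[39584568181888,145136080127008,599555215590625911808,2363498096041337586688,628641426776072321197278208,2478297930354109394270553088],[72568849565728,142937052678208,594943527373175277568,1189833009351798827008,623805723497611605475330048,1247611446130529883471874048],[],[46116860218637819968,83010348348874956928,599555215590625911808,1189833009351798827008,19809760720883589350884384768,39619068085361451178972684288],[41505174200208343168,152185638616702140448,594943527373175277568,2365803943448597774848,9913796188361452565605531648,39616650229110535902196154368],[7609281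9321240191008,149879795607484268608,1182915486921227534848,2363498096041337586688,9908960482777151039693160448,19817014268883748098291171328],[],[48357032784585716748386368,87042659012253575458979968,628641426776072321197278208,1247611446130529883471874048,9913796188361452565605531648,19817014268883748098291171328],[43521329506127200047595648,159578208189131188508819488,623805723497611605475330048,2480715781993343050666213888,9908960482777151039693160448,39619068085361451178972684288],[79789104094565800417427488,157160356549901930155475008,1240357891212848705493795328,2478297930354109394270553088,19809760720883589350884384768,39616650229110535902196154368],[],[39584568181888,79165913039488,41505174200208343168,83010348348874956928,43521329506127200047595648,87042659012253575458979968],[43982616789568,142937052678208,46116860218637819968,149879795607484268608,48357032784585716748386368,157160356549901930155475008],[72568849565728,145136080127008,76092819321240191008,152185638616702140448,79789104094565800417427488,159578208189131188508819488],[],[],[],[],[],[142937052678208,145136080127008,1217503264035724853248,2434979365684120649728,1276625665801420072422473728,2553251331170353017958432768],[72568849565728,79165913039488,737905862123808882688,2398085807185674108928,773712525129893931372249088,2514565704942614791038435328],[39584568181888,43982616789568,664118850654262263808,1328183622900706705408,696341272674522618331660288,1392682544484318509371752448],[],[149879795607484268608,152185638616702140448,737905862123808882688,1328183622900706705408,1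9846028633822609337292423168,39691603772888909765744263168],[76092819321240191008,83010348348874956928,664118850654262263808,2434979365684120649728,10058867355890498497599766528,39652918072874265620783300608],[41505174200208343168,46116860218637819968,1217503264035724853248,2398085807185674108928,9981496066541674237618290688,19962085401825148909259849728],[],[157160356549901930155475008,159578208189131188508819488,773712525129893931372249088,1392682544484318509371752448,10058867355890498497599766528,19962085401825148909259849728],[79789104094565800417427488,87042659012253575458979968,696341272674522618331660288,2553251331170353017958432768,9981496066541674237618290688,39691603772888909765744263168],[43521329506127200047595648,48357032784585716748386368,1276625665801420072422473728,2514565704942614791038435328,19846028633822609337292423168,39652918072874265620783300608],[],[72568849565728,142937052678208,594943527373175277568,1189833009351798827008,623805723497611605475330048,1247611446130529883471874048],[39584568181888,145136080127008,599555215590625911808,2363498096041337586688,628641426776072321197278208,2478297930354109394270553088],[43982616789568,79165913039488,1182915486921227534848,2365803943448597774848,1240357891212848705493795328,2480715781993343050666213888],[],[39584568181888,43982616789568,664118850654262263808,1328183622900706705408,696341272674522618331660288,1392682544484318509371752448],[72568849565728,79165913039488,737905862123808882688,2398085807185674108928,773712525129893931372249088,2514565704942614791038435328],[142937052678208,1451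36080127008,1217503264035724853248,2434979365684120649728,1276625665801420072422473728,2553251331170353017958432768],[],[],[],[],[],[2363498096041337586688,2365803943448597774848,2398085807185674108928,2434979365684120649728,20426315241432387579509997568,40852174773625479910546997248],[1182915486921227534848,1189833009351798827008,1217503264035724853248,1328183622900706705408,12380006036517360367575236608,40233203573688406631092584448],[594943527373175277568,599555215590625911808,664118850654262263808,737905862123808882688,11142065407098299320555798528,22283223529067702949278384128],[],[2478297930354109394270553088,2480715781993343050666213888,2514565704942614791038435328,2553251331170353017958432768,12380006036517360367575236608,22283223529067702949278384128],[1240357891212848705493795328,1247611446130529883471874048,1276625665801420072422473728,1392682544484318509371752448,11142065407098299320555798528,40852174773625479910546997248],[623805723497611605475330048,628641426776072321197278208,696341272674522618331660288,773712525129893931372249088,20426315241432387579509997568,40233203573688406631092584448],[],[76092819321240191008,149879795607484268608,1182915486921227534848,2363498096041337586688,9908960482777151039693160448,19817014268883748098291171328],[41505174200208343168,152185638616702140448,594943527373175277568,2365803943448597774848,9913796188361452565605531648,39616650229110535902196154368],[46116860218637819968,83010348348874956928,599555215590625911808,1189833009351798827008,19809760720883589350884384768,39619068085361451178972684288],[]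,[41505174200208343168,46116860218637819968,1217503264035724853248,2398085807185674108928,9981496066541674237618290688,19962085401825148909259849728],[76092819321240191008,83010348348874956928,664118850654262263808,2434979365684120649728,10058867355890498497599766528,39652918072874265620783300608],[149879795607484268608,152185638616702140448,737905862123808882688,1328183622900706705408,19846028633822609337292423168,39691603772888909765744263168],[],[594943527373175277568,599555215590625911808,664118850654262263808,737905862123808882688,11142065407098299320555798528,22283223529067702949278384128],[1182915486921227534848,1189833009351798827008,1217503264035724853248,1328183622900706705408,12380006036517360367575236608,40233203573688406631092584448],[2363498096041337586688,2365803943448597774848,2398085807185674108928,2434979365684120649728,20426315241432387579509997568,40852174773625479910546997248],[],[],[],[],[],[39616650229110535902196154368,39619068085361451178972684288,39652918072874265620783300608,39691603772888909765744263168,40233203573688406631092584448,40852174773625479910546997248],[19809760720883589350884384768,19817014268883748098291171328,19846028633822609337292423168,19962085401825148909259849728,20426315241432387579509997568,22283223529067702949278384128],[9908960482777151039693160448,9913796188361452565605531648,9981496066541674237618290688,10058867355890498497599766528,11142065407098299320555798528,12380006036517360367575236608],[],[79789104094565800417427488,157160356549901930155475008,1240357891212848705493795328,2478297930354109394270553088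,19809760720883589350884384768,39616650229110535902196154368],[43521329506127200047595648,159578208189131188508819488,623805723497611605475330048,2480715781993343050666213888,9908960482777151039693160448,39619068085361451178972684288],[48357032784585716748386368,87042659012253575458979968,628641426776072321197278208,1247611446130529883471874048,9913796188361452565605531648,19817014268883748098291171328],[],[43521329506127200047595648,48357032784585716748386368,1276625665801420072422473728,2514565704942614791038435328,19846028633822609337292423168,39652918072874265620783300608],[79789104094565800417427488,87042659012253575458979968,696341272674522618331660288,2553251331170353017958432768,9981496066541674237618290688,39691603772888909765744263168],[157160356549901930155475008,159578208189131188508819488,773712525129893931372249088,1392682544484318509371752448,10058867355890498497599766528,19962085401825148909259849728],[],[623805723497611605475330048,628641426776072321197278208,696341272674522618331660288,773712525129893931372249088,20426315241432387579509997568,40233203573688406631092584448],[1240357891212848705493795328,1247611446130529883471874048,1276625665801420072422473728,1392682544484318509371752448,11142065407098299320555798528,40852174773625479910546997248],[2478297930354109394270553088,2480715781993343050666213888,2514565704942614791038435328,2553251331170353017958432768,12380006036517360367575236608,22283223529067702949278384128],[],[9908960482777151039693160448,9913796188361452565605531648,9981496066541674237618290688,10058867355890498497599766528,1114206540709829932055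5798528,12380006036517360367575236608],[19809760720883589350884384768,19817014268883748098291171328,19846028633822609337292423168,19962085401825148909259849728,20426315241432387579509997568,22283223529067702949278384128],[39616650229110535902196154368,39619068085361451178972684288,39652918072874265620783300608,39691603772888909765744263168,40233203573688406631092584448,40852174773625479910546997248],[],[],[],[]]

def cert0 : List Nat := [5,14,13,17,19,15,37,18,6,79,10,17,9,29,6,15,37,9,38,38,9,10,6,33,10,29,10,59,53,15,17,18,59,19,7,77,58,6,37,35,6,7,29,7,10,55,6,18,10,29,10,13,33,7,34,7,55,18,38,18,55,34,9,10,29,10,6,37,10,57,55,9,33,18,37,18,33,54,6,39,33,6,7,10,59,7,29,11,17,7,15,34,19,15,57,34,15,31,31,13]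
def cert1 : List Nat := [19,15,57,35,59,19,58,13,9,30,6,53,15,17,18,14,39,19,7,77,17,34,57,6,14,34,9,35,6,18,57,59,33,79,13,7,15,14,38,15,14,53,38,14,77,53,14,15,35,15,6,31,15,54,17,9,30,6,57,14,53,13,38,7,18,6,35,15,13,30,77,13,38,53,6,15,38,9,39,10,9,17,19,11,37,18,6,59,14,17,13,33,6,13,38,11,37,38,13,14]
def cert2 : List Nat := [6,29,14,33,14,79,55,11,17,18,79,19,7,57,78,6,37,31,6,7,33,7,14,53,6,18,14,33,14,9,29,7,30,7,18,53,53,18,38,30,11,13,9,77,29,79,9,37,37,9,13,18,29,54,7,11,58,14,17,13,29,33,55,7,17,6,29,79,30,18,6,35,11,17,31,39,10,79,34,30,59,38,15,19,7,30,19,53,37,57,9,13,39,77,29,18,55,29,19,35]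
def cert3 : List Nat := [77,17,29,30,53,7,13,15,29,30,39,9,19,6,7,18,10,38,15,13,55,19,29,55,78,10,55,31,9,10,13,34,10,59,10,9,13,18,14,37,6,14,34,11,33,34,15,17,13,59,33,57,13,29,29,13,15,11,33,14,6,55,7,14,57,30,11,17,9,79,29,77,9,33,33,57,14,34,9,17,14,29,58,7,11,54,14,17,13,59,57,33,37,7,13,6,29,77,30,14]
def cert4 : List Nat := [6,39,11,13,14,77,15,7,53,78,6,7,37,7,15,54,6,33,31,6,14,15,37,14,9,30,7,29,11,13,31,38,30,55,35,10,77,34,19,15,7,30,15,57,33,53,9,14,35,79,13,29,30,57,7,17,19,29,30,35,9,15,6,7,19,15,59,14,10,34,78,9,10,14,35,10,55,10,59,31,15,29,59,79,29,14,59,29,15,39]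

def cert : List Nat := cert0++cert1++cert2++cert3++cert4


def bitn (k m : ℕ) : ℕ := m >>> k &&& 1

def goList (g : ℕ → List ℕ → Option (List ℕ)) : List ℕ → ℕ → List ℕ → Option (List ℕ)
  | [], _, s => some s
  | m :: opts, used, s => (g (used ||| m) s).bind (fun s' => goList g opts used s')

def go : ℕ → ℕ → List ℕ → Option (List ℕ)
  | 0, _, _ => none
  | _+1, _, [] => none
  | f+1, used, c :: s =>
    if bitn c used = 0 ∧ bitn c TMask = 1 then
      goList (go f) ((cellT.getD c []).filter (fun m => m &&& used == 0)) used s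
    else none

lemma bitn_eq_toNat (k m : ℕ) : bitn k m = (Nat.testBit m k).toNat := by
  rw [Nat.toNat_testBit, bitn, Nat.and_one_is_mod, Nat.shiftRight_eq_div_pow]

lemma bitn_le_one (k m : ℕ) : bitn k m ≤ 1 := by
  rw [bitn_eq_toNat]; exact Bool.toNat_le _

lemma bitn_zero (k : ℕ) : bitn k 0 = 0 := by
  simp [bitn_eq_toNat]

lemma bitn_eq_one_iff {k m : ℕ} : bitn k m = 1 ↔ Nat.testBit m k = true := by
  rw [bitn_eq_toNat]; cases h : Nat.testBit m k <;> simp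

lemma bitn_lor_of_disj {m u : ℕ} (h : m &&& u = 0) (k : ℕ) :
    bitn k (u ||| m) = bitn k u + bitn k m := by
  have hk : ¬(Nat.testBit m k = true ∧ Nat.testBit u k = true) := by
    rintro ⟨h1, h2⟩
    have := congrArg (fun x => Nat.testBit x k) h
    simp [Nat.testBit_land, h1, h2] at this
  rw [bitn_eq_toNat, bitn_eq_toNat, bitn_eq_toNat, Nat.testBit_lor]
  cases h1 : Nat.testBit u k <;> cases h2 : Nat.testBit m k <;> simp_all

lemma bitn_high {c m : ℕ} (hm : m < 2^100) (hc : 100 ≤ c) : bitn c m = 0 := by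
  rw [bitn_eq_toNat, Nat.testBit_eq_false_of_lt (lt_of_lt_of_le hm (Nat.pow_le_pow_right (by norm_num) hc))]
  rfl

def CoverInv (used : ℕ) (M : Multiset ℕ) : Prop :=
  ∀ k : ℕ, (M.map (fun m => bitn k m)).sum + bitn k used = bitn k TMask

lemma TMask_lt : TMask < 2^100 := by decide

lemma cellT_complete' : ∀ c : Fin 100, ∀ m ∈ ML, bitn c.val m = 1 → m ∈ cellT.getD c.val [] := by
  decide

lemma goList_some {g : ℕ → List ℕ → Option (List ℕ)} :
    ∀ {opts : List ℕ} {used s r}, goList g opts used s = some r →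
      ∀ m ∈ opts, ∃ s' r', g (used ||| m) s' = some r' := by
  intro opts
  induction opts with
  | nil => intro _ _ _ _ m hm; cases hm
  | cons m0 opts ih =>
    intro used s r h m hm
    rw [goList] at h
    cases hg : g (used ||| m0) s with
    | none => rw [hg] at h; cases h
    | some s1 =>
      rw [hg] at h
      rcases hm with _ | hm
      · exact ⟨s, s1, hg⟩
      · exact ih h m ‹m ∈ opts›

lemma go_sound : ∀ f used s r, go f used s = some r →
    ∀ M : Multiset ℕ, (∀ m ∈ M, m ∈ ML) → CoverInv used M → False := by
  intro f
  induction f with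
  | zero => intro used s r h; cases h
  | succ f ih =>
    intro used s r h M hML hInv
    match s with
    | [] => cases h
    | c :: s =>
      rw [go] at h
      split at h
      case isFalse => cases h
      case isTrue hc =>
        obtain ⟨hcu, hct⟩ := hc
        -- find m₀ ∈ M with bit c set
        have hsum := hInv c
        rw [hcu, Nat.add_zero, hct] at hsum
        have hex : ∃ m₀ ∈ M, bitn c m₀ = 1 := by
          by_contra hno
          push_neg at hno
          have : (M.map (fun m => bitn c m)).sum = 0 := by
            apply Multiset.sum_eq_zero
            intro x hx
            obtain ⟨m, hm, rfl⟩ := Multiset.mem_map.mp hx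
            have h1 := hno m hm
            have h2 := bitn_le_one c m
            omega
          rw [this] at hsum
          exact absurd hsum (by decide)
        obtain ⟨m₀, hm₀, hb₀⟩ := hex
        obtain ⟨M', rfl⟩ := Multiset.exists_cons_of_mem hm₀
        -- disjointness of m₀ and used
        have hdisj : m₀ &&& used = 0 := by
          apply Nat.eq_of_testBit_eq
          intro k
          rw [Nat.testBit_land, Nat.zero_testBit]
          by_contra hk
          have h1 : Nat.testBit m₀ k = true := by
            cases h' : Nat.testBit m₀ k <;> simp_all
          have h2 : Nat.testBit used k = true := by
            cases h' : Nat.testBit used k <;> simp_all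
          have hIk := hInv k
          rw [Multiset.map_cons, Multiset.sum_cons] at hIk
          have e1 : bitn k m₀ = 1 := bitn_eq_one_iff.mpr h1
          have e2 : bitn k used = 1 := bitn_eq_one_iff.mpr h2
          have := bitn_le_one k TMask
          omega
        -- c < 100
        have hc100 : c < 100 := by
          by_contra hge
          rw [bitn_high TMask_lt (le_of_not_gt hge)] at hct
          cases hct
        -- m₀ is in the filtered options
        have hmem : m₀ ∈ (cellT.getD c []).filter (fun m => m &&& used == 0) := by
          apply List.mem_filter.mpr
          refine ⟨cellT_complete' ⟨c, hc100⟩ m₀ (hML m₀ (Multiset.mem_cons_self _ _)) hb₀, ?_⟩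
          simp [hdisj]
        obtain ⟨s', r', hgo'⟩ := goList_some h m₀ hmem
        apply ih (used ||| m₀) s' r' hgo' M'
        · intro m hm; exact hML m (Multiset.mem_cons_of_mem hm)
        · intro k
          have hIk := hInv k
          rw [Multiset.map_cons, Multiset.sum_cons] at hIk
          rw [bitn_lor_of_disj hdisj]
          omega

theorem noCover (hchk : ∃ r, go 20 0 cert = some r) :
    ∀ M : Multiset ℕ, (∀ m ∈ M, m ∈ ML) →
      ¬(∀ k : ℕ, (M.map (fun m => bitn k m)).sum = bitn k TMask) := by
  intro M hML hInv
  obtain ⟨r, hr⟩ := hchk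
  apply go_sound 20 0 cert r hr M hML
  intro k
  rw [bitn_zero, Nat.add_zero]
  exact hInv k

instance : NeZero (1 * 4) := ⟨by norm_num⟩

def enc (i j : Fin 5) (d : ZMod (1 * 4)) : ℕ := (i.val * 5 + j.val) * 4 + ZMod.val d
abbrev Pt := Fin 5 × ZMod (1 * 4)
def cellEnc (x : Pt × Pt) : ℕ := enc x.1.1 x.2.1 (x.1.2 - x.2.2)
def cells (b : Finset Pt) : Multiset ℕ :=
  ((b.val ×ˢ b.val).filter (fun x => x.1 ≠ x.2)).map cellEnc
def maskOf (b : Finset Pt) : ℕ := ((cells b).map (fun e => 2 ^ e)).fold (· ||| ·) 0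
def cnt (b : Finset Pt) (i j : Fin 5) (d : ZMod (1 * 4)) : ℕ :=
  Multiset.card ((b.val ×ˢ b.val).filter
    (fun a => d = a.1.2 - a.2.2 ∧ (a.1.1 = i ∧ a.2.1 = j ∧ a.1 ≠ a.2)))
def ValidB (b : Finset Pt) : Prop := ∀ x ∈ b, ∀ y ∈ b, x ≠ y → x.1 ≠ y.1 ∧ x.2 ≠ y.2


-- fold-lor testBit
lemma testBit_fold (s : Multiset ℕ) (k : ℕ) :
    Nat.testBit ((s.map (fun e => 2 ^ e)).fold (· ||| ·) 0) k = true ↔ k ∈ s := by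
  induction s using Multiset.induction_on with
  | empty => simp
  | cons a t ih =>
    rw [Multiset.map_cons, Multiset.fold_cons_left, Nat.testBit_lor]
    constructor
    · intro h
      rcases Bool.or_eq_true_iff.mp h with h | h
      · have : a = k := by
          by_contra hne
          rw [Nat.testBit_two_pow_of_ne hne] at h
          cases h
        subst this
        exact Multiset.mem_cons_self _ _
      · exact Multiset.mem_cons_of_mem (ih.mp h)
    · intro h
      rcases Multiset.mem_cons.mp h with rfl | h
      · rw [Nat.testBit_two_pow_self]; rfl
      · rw [ih.mpr h, Bool.or_true]

lemma count_blockDelta (B : Multiset (Finset Pt)) (i j : Fin 5) (d : ZMod (1*4)) :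
    Multiset.count d (blockDelta B i j) = (B.map (fun b => cnt b i j d)).sum := by
  rw [blockDelta, Multiset.count_bind]
  congr 1
  apply Multiset.map_congr rfl
  intro b _
  rw [Multiset.count_map, Multiset.filter_filter]
  rfl

lemma card_le_one_of_allEq {α : Type*} (s : Multiset α) (hn : s.Nodup)
    (he : ∀ a ∈ s, ∀ b ∈ s, a = b) : Multiset.card s ≤ 1 := by
  induction s using Multiset.induction_on with
  | empty => simp
  | cons a t ih =>
    obtain ⟨ha, ht⟩ := Multiset.nodup_cons.mp hn
    have ht0 : t = 0 := by
      by_contra h0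
      obtain ⟨y, hy⟩ := Multiset.exists_mem_of_ne_zero h0
      exact ha ((he y (Multiset.mem_cons_of_mem hy) a (Multiset.mem_cons_self _ _)) ▸ hy)
    simp [ht0]

lemma cnt_le_one {b : Finset Pt} (hv : ValidB b) (i j : Fin 5) (d : ZMod (1*4)) :
    cnt b i j d ≤ 1 := by
  apply card_le_one_of_allEq
  · exact Multiset.Nodup.filter _ (Multiset.Nodup.product b.nodup b.nodup)
  · rintro ⟨z1, z2⟩ hz ⟨w1, w2⟩ hw
    obtain ⟨hzp, hzd, hz1, hz2, _⟩ := Multiset.mem_filter.mp hz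
    obtain ⟨hwp, hwd, hw1, hw2, _⟩ := Multiset.mem_filter.mp hw
    obtain ⟨hz1m, hz2m⟩ := Multiset.mem_product.mp hzp
    obtain ⟨hw1m, hw2m⟩ := Multiset.mem_product.mp hwp
    have e1 : z1 = w1 := by
      by_contra hne
      exact (hv z1 hz1m w1 hw1m hne).1 (hz1.trans hw1.symm)
    have e2 : z2 = w2 := by
      by_contra hne
      exact (hv z2 hz2m w2 hw2m hne).1 (hz2.trans hw2.symm)
    rw [e1, e2]

lemma enc_inj : ∀ i j : Fin 5, ∀ d : ZMod (1*4), ∀ i' j' : Fin 5, ∀ d' : ZMod (1*4),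
    enc i j d = enc i' j' d' → i = i' ∧ j = j' ∧ d = d' := by decide

lemma cnt_pos_iff {b : Finset Pt} (i j : Fin 5) (d : ZMod (1*4)) :
    0 < cnt b i j d ↔ enc i j d ∈ cells b := by
  rw [cnt, Multiset.card_pos_iff_exists_mem, cells]
  constructor
  · rintro ⟨a, ha⟩
    obtain ⟨hap, had, ha1, ha2, hane⟩ := Multiset.mem_filter.mp ha
    refine Multiset.mem_map.mpr ⟨a, Multiset.mem_filter.mpr ⟨hap, hane⟩, ?_⟩
    rw [cellEnc, ha1, ha2, ← had]
  · intro h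
    obtain ⟨a, haf, hae⟩ := Multiset.mem_map.mp h
    obtain ⟨hap, hane⟩ := Multiset.mem_filter.mp haf
    obtain ⟨e1, e2, e3⟩ := enc_inj _ _ _ _ _ _ hae
    exact ⟨a, Multiset.mem_filter.mpr ⟨hap, e3.symm, e1, e2, hane⟩⟩

lemma bitn_maskOf {b : Finset Pt} (hv : ValidB b) (i j : Fin 5) (d : ZMod (1*4)) :
    bitn (enc i j d) (maskOf b) = cnt b i j d := by
  have hle := cnt_le_one hv i j d
  have hiff : Nat.testBit (maskOf b) (enc i j d) = true ↔ 0 < cnt b i j d := by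
    rw [maskOf, testBit_fold]; exact (cnt_pos_iff i j d).symm
  rw [bitn_eq_toNat]
  rcases Nat.lt_or_ge 0 (cnt b i j d) with hpos | hz
  · rw [hiff.mpr hpos]; simp; omega
  · have h0 : cnt b i j d = 0 := by omega
    rw [h0]
    cases h : Nat.testBit (maskOf b) (enc i j d)
    · rfl
    · have := hiff.mp h
      omega

lemma enc_lt (i j : Fin 5) (d : ZMod (1*4)) : enc i j d < 100 := by
  have h1 := i.isLt
  have h2 := j.isLt
  have h3 : ZMod.val d < 1 * 4 := ZMod.val_lt d
  rw [enc]; omega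

lemma cells_lt {b : Finset Pt} {e : ℕ} (h : e ∈ cells b) : e < 100 := by
  obtain ⟨a, _, rfl⟩ := Multiset.mem_map.mp h
  exact enc_lt _ _ _

lemma count_zero_nonHole : Multiset.count 0 (nonHoleDiffs 1 4) = 0 := by decide

lemma valid_of_mem {B : Multiset (Finset Pt)}
    (hpair : ∀ i j : Fin 5, i ≠ j → blockDelta B i j = nonHoleDiffs 1 4)
    (hdiag : ∀ i : Fin 5, blockDelta B i i = 0) :
    ∀ b ∈ B, ValidB b := by
  intro b hb x hx y hy hxy
  obtain ⟨B', rfl⟩ := Multiset.exists_cons_of_mem hb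
  have key : ∀ i j : Fin 5, ∀ d : ZMod (1*4), 0 < cnt b i j d →
      0 < Multiset.count d (blockDelta (b ::ₘ B') i j) := by
    intro i j d hpos
    rw [count_blockDelta, Multiset.map_cons, Multiset.sum_cons]
    omega
  constructor
  · intro h1
    have hpos : 0 < cnt b x.1 x.1 (x.2 - y.2) := by
      rw [cnt, Multiset.card_pos_iff_exists_mem]
      refine ⟨(x, y), Multiset.mem_filter.mpr ⟨Multiset.mem_product.mpr ⟨hx, hy⟩, rfl, rfl, h1.symm, hxy⟩⟩
    have := key _ _ _ hpos
    rw [hdiag x.1] at this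
    simp at this
  · intro h2
    have hne1 : x.1 ≠ y.1 := fun h1 => hxy (Prod.ext h1 h2)
    have hd0 : x.2 - y.2 = 0 := by rw [h2, sub_self]
    have hpos : 0 < cnt b x.1 y.1 (0 : ZMod (1*4)) := by
      rw [cnt, Multiset.card_pos_iff_exists_mem]
      exact ⟨(x, y), Multiset.mem_filter.mpr ⟨Multiset.mem_product.mpr ⟨hx, hy⟩, hd0.symm, rfl, rfl, hxy⟩⟩
    have := key _ _ _ hpos
    rw [hpair x.1 y.1 hne1, count_zero_nonHole] at this
    exact absurd this (by omega)


lemma decode : ∀ k : Fin 100, ∃ i j : Fin 5, ∃ d : ZMod (1*4), (k : ℕ) = enc i j d := by decide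

lemma maskOf_mem : ∀ x y z : Pt, x.1 ≠ y.1 → x.2 ≠ y.2 → x.1 ≠ z.1 → x.2 ≠ z.2 →
    y.1 ≠ z.1 → y.2 ≠ z.2 → maskOf {x, y, z} ∈ ML := by decide

lemma TMask_diag : ∀ i : Fin 5, ∀ d : ZMod (1*4), bitn (enc i i d) TMask = 0 := by decide

lemma TMask_count : ∀ i j : Fin 5, i ≠ j → ∀ d : ZMod (1*4),
    Multiset.count d (nonHoleDiffs 1 4) = bitn (enc i j d) TMask := by decide

lemma checker_ok : go 20 0 cert = some [] := by decide


/-- There is no `3`-SCHGDD of type `(5, 1^4)`. -/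
theorem no_schgdd_five_one_four :
    ¬ ∃ B : Multiset (Finset (Fin 5 × ZMod (1 * 4))), IsSCHGDD 3 5 1 4 B := by
  rintro ⟨B, hB⟩
  have hcard : ∀ b ∈ B, b.card = 3 := hB.1
  have hpair : ∀ i j : Fin 5, i ≠ j → blockDelta B i j = nonHoleDiffs 1 4 := hB.2.1
  have hdiag : ∀ i : Fin 5, blockDelta B i i = 0 := hB.2.2
  have hvalid := valid_of_mem hpair hdiag
  refine noCover ⟨[], checker_ok⟩ (B.map maskOf) ?_ ?_
  · intro m hm
    obtain ⟨b, hb, rfl⟩ := Multiset.mem_map.mp hm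
    obtain ⟨x, y, z, hxy, hxz, hyz, rfl⟩ := Finset.card_eq_three.mp (hcard b hb)
    have hv := hvalid _ hb
    have hx : x ∈ ({x, y, z} : Finset Pt) := by simp
    have hy : y ∈ ({x, y, z} : Finset Pt) := by simp
    have hz : z ∈ ({x, y, z} : Finset Pt) := by simp
    exact maskOf_mem x y z (hv x hx y hy hxy).1 (hv x hx y hy hxy).2 (hv x hx z hz hxz).1
      (hv x hx z hz hxz).2 (hv y hy z hz hyz).1 (hv y hy z hz hyz).2
  · intro k
    rw [Multiset.map_map]
    by_cases hk : k < 100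
    · obtain ⟨i, j, d, hkeq⟩ := decode ⟨k, hk⟩
      have hkeq' : k = enc i j d := hkeq
      subst hkeq'
      have hmc : B.map (bitn (enc i j d) ∘ maskOf) = B.map (fun b => cnt b i j d) :=
        Multiset.map_congr rfl (fun b hb => bitn_maskOf (hvalid b hb) i j d)
      rw [hmc, ← count_blockDelta]
      by_cases hij : i = j
      · subst hij
        rw [hdiag i, TMask_diag i d]
        simp
      · rw [hpair i j hij]
        exact TMask_count i j hij d
    · have hsum0 : (B.map (bitn k ∘ maskOf)).sum = 0 := by
        apply Multiset.sum_eq_zero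
        intro x hx
        obtain ⟨b, hb, rfl⟩ := Multiset.mem_map.mp hx
        show bitn k (maskOf b) = 0
        rw [bitn_eq_toNat]
        cases h : Nat.testBit (maskOf b) k
        · rfl
        · rw [maskOf, testBit_fold] at h
          exact absurd (cells_lt h) hk
      rw [hsum0, bitn_high TMask_lt (le_of_not_gt hk)]
end

section
/- If there exist a k-SCHGDD of type (n, w^t) and a (k, v)-CDM, then there exists a k-SCHGDD of type (n, (wv)^t). -/
/-- A `(k, m)`-cyclic difference matrix: a `k × m` matrix over `Z_m` such that for any two
distinct rows, the list of entrywise differences contains each element of `Z_m` exactly once. -/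
def IsCDM (k m : ℕ) (D : Fin k → Fin m → ZMod m) : Prop :=
  ∀ x y : Fin k, x ≠ y →
    ((Finset.univ.val : Multiset (Fin m)).map (fun j => D x j - D y j))
      = (Multiset.range m).map (fun z => (z : ZMod m))

/-! ### Auxiliary lemmas -/

private lemma normalize_cast_range (N M : ℕ) :
    ((Multiset.range N).map (fun z => (z : ZMod M)))
      = (Multiset.range N).map (fun a : ℕ => (a : ZMod M)) := by
  simp only [Multiset.pure_def, Multiset.bind_def, Multiset.bind_singleton, Multiset.map_id',
    Multiset.map_map]
  rfl

private lemma map_sprod_map {α β : Type*} (f : α → β) (s t : Multiset α) :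
    (s.map f) ×ˢ (t.map f) = (s ×ˢ t).map (fun pq => (f pq.1, f pq.2)) := by
  simp only [SProd.sprod, Multiset.product, Multiset.bind_map, Multiset.map_bind,
    Multiset.map_map]
  rfl

private lemma range_mul_bind (a : ℕ) : ∀ b : ℕ,
    Multiset.range (a * b)
      = (Multiset.range b).bind (fun e => (Multiset.range a).map (fun x => a * e + x)) := by
  intro b
  induction b with
  | zero => simp
  | succ b ih =>
    rw [Nat.mul_succ, Multiset.range_add, ih, Multiset.range_succ, Multiset.cons_bind, add_comm]

private lemma multiset_filter_bind {α β : Type*} (p : β → Prop) [DecidablePred p]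
    (s : Multiset α) (f : α → Multiset β) :
    (s.bind f).filter p = s.bind (fun a => (f a).filter p) := by
  induction s using Multiset.induction_on with
  | empty => simp
  | cons a s ih => simp [Multiset.filter_add, ih]

private lemma zmod_univ_val (v : ℕ) [NeZero v] :
    (Finset.univ.val : Multiset (ZMod v)) = (Multiset.range v).map (fun z : ℕ => (z : ZMod v)) := by
  have h : (Finset.univ : Finset (ZMod v)) = (Finset.range v).image (fun z : ℕ => (z : ZMod v)) := by
    ext x
    simp only [Finset.mem_univ, true_iff, Finset.mem_image, Finset.mem_range]
    exact ⟨x.val, ZMod.val_lt x, ZMod.natCast_rightInverse x⟩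
  rw [h, Finset.image_val, Finset.range_val, Multiset.dedup_eq_self.mpr]
  apply Multiset.Nodup.map_on
  · intro x hx y hy hxy
    rw [Multiset.mem_range] at hx hy
    have := congrArg ZMod.val hxy
    rwa [ZMod.val_cast_of_lt hx, ZMod.val_cast_of_lt hy] at this
  · exact Multiset.nodup_range v

private lemma univ_map_add {G β : Type*} [AddGroup G] [Fintype G] (δ : G) (f : G → β) :
    (Finset.univ.val : Multiset G).map (fun z => f (δ + z)) = Finset.univ.val.map f := by
  conv_rhs => rw [← Multiset.map_univ_val_equiv (Equiv.addLeft δ), Multiset.map_map]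
  rfl

private lemma mem_holeMultiples_iff (m t : ℕ) (hm : m * t ≠ 0) (x : ℕ) (hx : x < m * t) :
    ((x : ℕ) : ZMod (m * t)) ∈ holeMultiples m t ↔ t ∣ x := by
  haveI : NeZero (m * t) := ⟨hm⟩
  have ht : 0 < t := Nat.pos_of_ne_zero (fun h => hm (by rw [h, Nat.mul_zero]))
  constructor
  · intro hmem
    rw [holeMultiples, Multiset.mem_map] at hmem
    obtain ⟨c, hc, hcast⟩ := hmem
    rw [Multiset.mem_range] at hc
    have hct : c * t < m * t := Nat.mul_lt_mul_of_lt_of_le hc le_rfl ht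
    have := congrArg ZMod.val hcast
    rw [ZMod.val_cast_of_lt hct, ZMod.val_cast_of_lt hx] at this
    exact this ▸ Dvd.intro_left c rfl
  · rintro ⟨c, rfl⟩
    rw [holeMultiples, Multiset.mem_map]
    refine ⟨c, ?_, by rw [Nat.mul_comm c t]⟩
    rw [Multiset.mem_range]
    have : c * t < m * t := by rw [Nat.mul_comm c t]; exact hx
    exact Nat.lt_of_mul_lt_mul_right this

private lemma nonHoleDiffs_eq (m t : ℕ) (hm : m * t ≠ 0) :
    nonHoleDiffs m t
      = ((Multiset.range (m * t)).filter (fun x => ¬ t ∣ x)).map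
          (fun x : ℕ => ((x : ℕ) : ZMod (m * t))) := by
  rw [nonHoleDiffs, normalize_cast_range, Multiset.filter_map
    (p := fun z => z ∉ holeMultiples m t) (fun z : ℕ => (z : ZMod (m * t)))
    (Multiset.range (m * t))]
  refine congrArg (Multiset.map (fun x : ℕ => ((x : ℕ) : ZMod (m * t))))
    (Multiset.filter_congr (p := fun x : ℕ => ((x : ℕ) : ZMod (m * t)) ∉ holeMultiples m t)
      (q := fun x : ℕ => ¬ t ∣ x) ?_)
  intro x hx
  rw [Multiset.mem_range] at hx
  exact not_congr (mem_holeMultiples_iff m t hm x hx)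

/-! ### The construction maps -/

private def lam' (w t v : ℕ) (x : ZMod (w * t)) : ZMod (w * v * t) :=
  ((x.val : ℕ) : ZMod (w * v * t))

private def iot' (w t v : ℕ) (e : ZMod v) : ZMod (w * v * t) :=
  ((w * t * e.val : ℕ) : ZMod (w * v * t))

private def cmap (w t v : ℕ) : ZMod (w * v * t) →+* ZMod (w * t) :=
  ZMod.castHom (show (w * t) ∣ (w * v * t) from ⟨v, by ring⟩) (ZMod (w * t))

private lemma iot_mod (w t v : ℕ) (a b : ℕ) (h : a % v = b % v) :
    ((w * t * a : ℕ) : ZMod (w * v * t)) = ((w * t * b : ℕ) : ZMod (w * v * t)) := by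
  rw [ZMod.natCast_eq_natCast_iff]
  have h1 : a ≡ b [MOD v] := h
  have h2 : w * t * a ≡ w * t * b [MOD (w * t) * v] := Nat.ModEq.mul_left' (w * t) h1
  have h3 : (w * t) * v = w * v * t := by ring
  rwa [h3] at h2

private lemma iot_natCast (w t v : ℕ) (e : ℕ) :
    iot' w t v ((e : ℕ) : ZMod v) = ((w * t * e : ℕ) : ZMod (w * v * t)) := by
  rw [iot']
  exact iot_mod w t v _ e (by rw [ZMod.val_natCast, Nat.mod_mod_of_dvd _ dvd_rfl])

private lemma iot_add (w t v : ℕ) [NeZero v] (a b : ZMod v) :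
    iot' w t v (a + b) = iot' w t v a + iot' w t v b := by
  rw [iot', ZMod.val_add]
  rw [iot_mod w t v _ (a.val + b.val) (by rw [Nat.mod_mod_of_dvd _ dvd_rfl])]
  rw [Nat.mul_add, Nat.cast_add]
  rfl

private lemma iot_sub (w t v : ℕ) [NeZero v] (a b : ZMod v) :
    iot' w t v a - iot' w t v b = iot' w t v (a - b) := by
  have h := iot_add w t v (a - b) b
  have h2 : a - b + b = a := by ring
  rw [h2] at h
  rw [h]; ring

private lemma c_lam (w t v : ℕ) [NeZero (w * t)] (x : ZMod (w * t)) :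
    cmap w t v (lam' w t v x) = x := by
  rw [lam', cmap, map_natCast]
  exact ZMod.natCast_rightInverse x

private lemma c_iot (w t v : ℕ) (e : ZMod v) :
    cmap w t v (iot' w t v e) = 0 := by
  rw [iot', cmap, map_natCast, Nat.cast_mul, ZMod.natCast_self, zero_mul]

private lemma ker_iot (w t v : ℕ) [NeZero (w * v * t)] (z : ZMod (w * v * t))
    (hz : cmap w t v z = 0) : ∃ e : ZMod v, z = iot' w t v e := by
  have hzval : z = ((z.val : ℕ) : ZMod (w * v * t)) := (ZMod.natCast_rightInverse z).symm
  have h1 : ((z.val : ℕ) : ZMod (w * t)) = 0 := by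
    have : cmap w t v z = ((z.val : ℕ) : ZMod (w * t)) := by
      conv_lhs => rw [hzval]
      rw [cmap, map_natCast]
    rwa [this] at hz
  obtain ⟨e, he⟩ := (ZMod.natCast_eq_zero_iff z.val (w * t)).mp h1
  refine ⟨(e : ZMod v), ?_⟩
  rw [iot_natCast, ← he, ← hzval]

private def rowOf (k v : ℕ) (D : Fin k → Fin v → ZMod v) (s : ℕ) (col : Fin v) : ZMod v :=
  if h : s < k then D ⟨s, h⟩ col else 0

private noncomputable def phi (k : ℕ) {n : ℕ} (w t v : ℕ) (D : Fin k → Fin v → ZMod v)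
    (b : Finset (Fin n × ZMod (w * t))) (col : Fin v) (p : Fin n × ZMod (w * t)) :
    Fin n × ZMod (w * v * t) :=
  (p.1, lam' w t v p.2 + iot' w t v (rowOf k v D (@List.idxOf _ instBEqOfDecidableEq p b.toList) col))

private noncomputable def newBlock (k : ℕ) {n : ℕ} (w t v : ℕ) (D : Fin k → Fin v → ZMod v)
    (b : Finset (Fin n × ZMod (w * t))) (col : Fin v) : Finset (Fin n × ZMod (w * v * t)) :=
  b.image (phi k w t v D b col)

private def FdDef (w t v : ℕ) [NeZero v] (d : ZMod (w * t)) : Multiset (ZMod (w * v * t)) :=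
  (Finset.univ.val : Multiset (ZMod v)).map (fun z => lam' w t v d + iot' w t v z)

/-- If there exist a `k`-SCHGDD of type `(n, w^t)` and a `(k, v)`-CDM, then there exists a
`k`-SCHGDD of type `(n, (wv)^t)`. -/
theorem schgdd_mul_cdm (k n w t v : ℕ)
    (h1 : ∃ B : Multiset (Finset (Fin n × ZMod (w * t))), IsSCHGDD k n w t B)
    (h2 : ∃ D : Fin k → Fin v → ZMod v, IsCDM k v D) :
    ∃ B' : Multiset (Finset (Fin n × ZMod (w * v * t))), IsSCHGDD k n (w * v) t B' := by
  obtain ⟨B, hBcard, hBne, hBii⟩ := h1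
  obtain ⟨D, hD⟩ := h2
  by_cases h0 : w * v * t = 0
  · -- degenerate case: `Z_{wvt}` is trivial in the sense that `nonHoleDiffs (w*v) t = 0`
    have hr : Multiset.range (w * v * t) = 0 := by rw [h0]; rfl
    have hnh : nonHoleDiffs (w * v) t = 0 := by
      rw [nonHoleDiffs, hr]
      simp only [Multiset.pure_def, Multiset.bind_def, Multiset.zero_bind, Multiset.map_zero,
        Multiset.filter_zero]
    refine ⟨0, ?_, ?_, ?_⟩
    · intro b hb; simp at hb
    · intro i j _
      rw [hnh]
      simp [blockDelta]
    · intro i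
      simp [blockDelta]
  · -- main construction
    have hw : w ≠ 0 := fun h => h0 (by rw [h]; ring)
    have hv : v ≠ 0 := fun h => h0 (by rw [h]; ring)
    have ht : t ≠ 0 := fun h => h0 (by rw [h]; ring)
    have hwt : w * t ≠ 0 := Nat.mul_ne_zero hw ht
    haveI : NeZero (w * v * t) := ⟨h0⟩
    haveI : NeZero (w * t) := ⟨hwt⟩
    haveI : NeZero v := ⟨hv⟩
    -- injectivity of `phi` on each block
    have hinj : ∀ (b : Finset (Fin n × ZMod (w * t))) (col : Fin v),
        Set.InjOn (phi k w t v D b col) ↑b := by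
      intro b col p hp q hq hpq
      have h1 : p.1 = q.1 := (Prod.ext_iff.mp hpq).1
      have h2 : lam' w t v p.2 + iot' w t v (rowOf k v D (@List.idxOf _ instBEqOfDecidableEq p b.toList) col)
          = lam' w t v q.2 + iot' w t v (rowOf k v D (@List.idxOf _ instBEqOfDecidableEq q b.toList) col) :=
        (Prod.ext_iff.mp hpq).2
      have h3 := congrArg (cmap w t v) h2
      rw [map_add, map_add, c_iot, c_iot, add_zero, add_zero, c_lam, c_lam] at h3
      exact Prod.ext h1 h3
    have hval : ∀ (b : Finset (Fin n × ZMod (w * t))) (col : Fin v),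
        (newBlock k w t v D b col).val = b.val.map (phi k w t v D b col) := by
      intro b col
      rw [newBlock, Finset.image_val, Multiset.dedup_eq_self.mpr]
      exact Multiset.Nodup.map_on
        (fun x hx y hy h => hinj b col hx hy h) b.nodup
    -- CDM step
    have cdm_step : ∀ (r r' : Fin k), r ≠ r' → ∀ C : ZMod (w * v * t),
        (Finset.univ.val : Multiset (Fin v)).map (fun col => C + iot' w t v (D r col - D r' col))
          = (Finset.univ.val : Multiset (ZMod v)).map (fun z => C + iot' w t v z) := by
      intro r r' hrr C
      have h1 : (fun col => C + iot' w t v (D r col - D r' col))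
          = (fun z => C + iot' w t v z) ∘ (fun col => D r col - D r' col) := rfl
      rw [h1, ← Multiset.map_map, hD r r' hrr, normalize_cast_range, ← zmod_univ_val]
    -- shift step
    have shift : ∀ (C : ZMod (w * v * t)) (d : ZMod (w * t)), cmap w t v C = d →
        (Finset.univ.val : Multiset (ZMod v)).map (fun z => C + iot' w t v z)
          = FdDef w t v d := by
      intro C d hC
      obtain ⟨δ, hδ⟩ := ker_iot w t v (C - lam' w t v d)
        (by rw [map_sub, hC, c_lam]; ring)
      have hCe : C = lam' w t v d + iot' w t v δ := by rw [← hδ]; ring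
      rw [hCe, FdDef]
      rw [Multiset.map_congr rfl (fun z _ => by rw [add_assoc, ← iot_add w t v δ z])]
      exact univ_map_add δ (fun y => lam' w t v d + iot' w t v y)
    -- the key identity
    have key : ∀ i j : Fin n,
        blockDelta (B.bind fun b =>
            (Finset.univ.val : Multiset (Fin v)).map (newBlock k w t v D b)) i j
          = (blockDelta B i j).bind (FdDef w t v) := by
      intro i j
      simp only [blockDelta]
      rw [Multiset.bind_assoc, Multiset.bind_assoc]
      refine Multiset.bind_congr (fun b hb => ?_)
      rw [Multiset.bind_map]
      have hcol : ∀ col : Fin v,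
          (((newBlock k w t v D b col).val ×ˢ (newBlock k w t v D b col).val).filter
              (fun p => p.1.1 = i ∧ p.2.1 = j ∧ p.1 ≠ p.2)).map (fun p => p.1.2 - p.2.2)
            = ((b.val ×ˢ b.val).filter (fun p => p.1.1 = i ∧ p.2.1 = j ∧ p.1 ≠ p.2)).map
                (fun pq => (phi k w t v D b col pq.1).2 - (phi k w t v D b col pq.2).2) := by
        intro col
        rw [hval b col, map_sprod_map, Multiset.filter_map
          (p := fun p : (Fin n × ZMod (w * v * t)) × (Fin n × ZMod (w * v * t)) =>
            p.1.1 = i ∧ p.2.1 = j ∧ p.1 ≠ p.2)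
          (fun pq : (Fin n × ZMod (w * t)) × (Fin n × ZMod (w * t)) =>
            (phi k w t v D b col pq.1, phi k w t v D b col pq.2)) (b.val ×ˢ b.val),
          Multiset.map_map]
        have hfil : Multiset.filter
            ((fun p : (Fin n × ZMod (w * v * t)) × (Fin n × ZMod (w * v * t)) =>
              p.1.1 = i ∧ p.2.1 = j ∧ p.1 ≠ p.2) ∘
              (fun pq : (Fin n × ZMod (w * t)) × (Fin n × ZMod (w * t)) =>
                (phi k w t v D b col pq.1, phi k w t v D b col pq.2))) (b.val ×ˢ b.val)
            = Multiset.filter (fun p => p.1.1 = i ∧ p.2.1 = j ∧ p.1 ≠ p.2) (b.val ×ˢ b.val) := by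
          refine Multiset.filter_congr (fun pq hpq => ?_)
          have hm := Multiset.mem_product.mp hpq
          simp only [Function.comp]
          constructor
          · rintro ⟨ha, hb', hc'⟩
            exact ⟨ha, hb', fun h => hc' (by rw [h])⟩
          · rintro ⟨ha, hb', hc'⟩
            refine ⟨ha, hb', fun h => hc' ?_⟩
            exact hinj b col hm.1 hm.2 h
        rw [hfil]
        rfl
      rw [Multiset.bind_congr (fun col _ => hcol col), Multiset.bind_map_comm]
      have perpair : ∀ pq ∈ (b.val ×ˢ b.val).filter
          (fun p => p.1.1 = i ∧ p.2.1 = j ∧ p.1 ≠ p.2),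
          (Finset.univ.val : Multiset (Fin v)).map
              (fun col => (phi k w t v D b col pq.1).2 - (phi k w t v D b col pq.2).2)
            = FdDef w t v (pq.1.2 - pq.2.2) := by
        intro pq hpq
        rw [Multiset.mem_filter] at hpq
        obtain ⟨hmem, hP⟩ := hpq
        have hm := Multiset.mem_product.mp hmem
        have hp1 : pq.1 ∈ b := hm.1
        have hp2 : pq.2 ∈ b := hm.2
        have hne : pq.1 ≠ pq.2 := hP.2.2
        have hs1 : @List.idxOf _ instBEqOfDecidableEq pq.1 b.toList < k := by
          rw [← hBcard b hb, ← Finset.length_toList]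
          exact (@List.idxOf_lt_length_iff _ instBEqOfDecidableEq inferInstance _ _).mpr (Finset.mem_toList.mpr hp1)
        have hs2 : @List.idxOf _ instBEqOfDecidableEq pq.2 b.toList < k := by
          rw [← hBcard b hb, ← Finset.length_toList]
          exact (@List.idxOf_lt_length_iff _ instBEqOfDecidableEq inferInstance _ _).mpr (Finset.mem_toList.mpr hp2)
        have hsne : (⟨@List.idxOf _ instBEqOfDecidableEq pq.1 b.toList, hs1⟩ : Fin k) ≠ ⟨@List.idxOf _ instBEqOfDecidableEq pq.2 b.toList, hs2⟩ := by
          intro h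
          exact hne ((@List.idxOf_inj _ instBEqOfDecidableEq inferInstance _ _ _ (Finset.mem_toList.mpr hp1)
            ).mp (by exact congrArg Fin.val h))
        have hrow : ∀ col : Fin v,
            (phi k w t v D b col pq.1).2 - (phi k w t v D b col pq.2).2
              = (lam' w t v pq.1.2 - lam' w t v pq.2.2)
                + iot' w t v (D ⟨@List.idxOf _ instBEqOfDecidableEq pq.1 b.toList, hs1⟩ col
                    - D ⟨@List.idxOf _ instBEqOfDecidableEq pq.2 b.toList, hs2⟩ col) := by
          intro col
          show (lam' w t v pq.1.2 + iot' w t v (rowOf k v D (@List.idxOf _ instBEqOfDecidableEq pq.1 b.toList) col))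
              - (lam' w t v pq.2.2 + iot' w t v (rowOf k v D (@List.idxOf _ instBEqOfDecidableEq pq.2 b.toList) col)) = _
          rw [rowOf, rowOf, dif_pos hs1, dif_pos hs2, ← iot_sub w t v]
          ring
        rw [Multiset.map_congr rfl (fun col _ => hrow col),
          cdm_step _ _ hsne (lam' w t v pq.1.2 - lam' w t v pq.2.2)]
        exact shift _ _ (by rw [map_sub, c_lam, c_lam])
      rw [Multiset.bind_congr perpair, ← Multiset.bind_map]
    -- final difference computation
    have final : (nonHoleDiffs w t).bind (FdDef w t v) = nonHoleDiffs (w * v) t := by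
      rw [nonHoleDiffs_eq w t hwt, nonHoleDiffs_eq (w * v) t h0, Multiset.bind_map]
      have hFd : ∀ x ∈ (Multiset.range (w * t)).filter (fun x => ¬ t ∣ x),
          FdDef w t v ((x : ℕ) : ZMod (w * t))
            = (Multiset.range v).map (fun e => ((x + w * t * e : ℕ) : ZMod (w * v * t))) := by
        intro x hx
        have hxlt : x < w * t := Multiset.mem_range.mp (Multiset.mem_filter.mp hx).1
        rw [FdDef, zmod_univ_val, Multiset.map_map]
        refine Multiset.map_congr rfl (fun e _ => ?_)
        show lam' w t v ((x : ℕ) : ZMod (w * t)) + iot' w t v ((e : ℕ) : ZMod v) = _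
        rw [iot_natCast, lam', ZMod.val_natCast, Nat.mod_eq_of_lt hxlt, ← Nat.cast_add]
      rw [Multiset.bind_congr hFd, Multiset.bind_map_comm]
      have hrange : (Multiset.range (w * v * t)).filter (fun x => ¬ t ∣ x)
          = (Multiset.range v).bind (fun e =>
              ((Multiset.range (w * t)).filter (fun x => ¬ t ∣ x)).map
                (fun x => w * t * e + x)) := by
        rw [show w * v * t = (w * t) * v from by ring, range_mul_bind, multiset_filter_bind]
        refine Multiset.bind_congr (fun e _ => ?_)
        rw [Multiset.filter_map (p := fun x => ¬ t ∣ x) (fun x => w * t * e + x)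
          (Multiset.range (w * t))]
        refine congrArg (Multiset.map (fun x => w * t * e + x))
          (Multiset.filter_congr
            (p := fun x : ℕ => ¬ t ∣ (w * t * e + x)) (q := fun x : ℕ => ¬ t ∣ x)
            (fun x _ => ?_))
        have hdvd : t ∣ w * t * e := ⟨w * e, by ring⟩
        exact not_congr (Nat.dvd_add_right hdvd)
      rw [hrange, Multiset.map_bind]
      refine Multiset.bind_congr (fun e _ => ?_)
      rw [Multiset.map_map]
      refine Multiset.map_congr rfl (fun x _ => ?_)
      show ((x + w * t * e : ℕ) : ZMod (w * v * t)) = ((w * t * e + x : ℕ) : ZMod (w * v * t))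
      rw [Nat.add_comm]
    refine ⟨B.bind fun b =>
      (Finset.univ.val : Multiset (Fin v)).map (newBlock k w t v D b), ?_, ?_, ?_⟩
    · intro b' hb'
      rw [Multiset.mem_bind] at hb'
      obtain ⟨b, hb, hb'mem⟩ := hb'
      rw [Multiset.mem_map] at hb'mem
      obtain ⟨col, _, rfl⟩ := hb'mem
      rw [newBlock, Finset.card_image_of_injOn (hinj b col), hBcard b hb]
    · intro i j hij
      rw [key i j, hBne i j hij, final]
    · intro i
      rw [key i i, hBii i, Multiset.zero_bind]
end

section
/- Suppose there exist a k-SCHGDD of type (n, m^t) and a k-SCGDD of type m^n. Then there exists a k-SCGDD of type (mt)^n. -/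
/-- A semi-cyclic `k`-GDD of type `m^n`, given by its multiset `B` of base blocks
(`k`-subsets of `I_n × Z_m`, groups `{i} × Z_m`): `Δ_{ij}(B) = Z_m` for `i ≠ j` and
`Δ_{ii}(B) = ∅`. -/
def IsSCGDD (k n m : ℕ) (B : Multiset (Finset (Fin n × ZMod m))) : Prop :=
  (∀ b ∈ B, b.card = k) ∧
  (∀ i j : Fin n, i ≠ j →
    blockDelta B i j = (Multiset.range m).map (fun z => (z : ZMod m))) ∧
  (∀ i : Fin n, blockDelta B i i = 0)

/-- The "plain" form of the cast of `range m` into `ZMod m`. -/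
def plainRange (N : ℕ) : Multiset (ZMod N) :=
  Multiset.map (fun z : ℕ => (z : ZMod N)) (Multiset.range N)

lemma range_cast_eq (N : ℕ) :
    ((Multiset.range N).map (fun z => (z : ZMod N))) = plainRange N := by
  simp [plainRange, Bind.bind, Pure.pure, Multiset.bind_singleton]

lemma nonHoleDiffs_eq_s14 (m t : ℕ) :
    nonHoleDiffs m t = (plainRange (m * t)).filter (fun z => z ∉ holeMultiples m t) := by
  unfold nonHoleDiffs
  congr 1
  exact range_cast_eq (m * t)

/-- A characterization of `IsSCGDD` avoiding the monadic coercion. -/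
lemma isSCGDD_iff (k n m : ℕ) (B : Multiset (Finset (Fin n × ZMod m))) :
    IsSCGDD k n m B ↔
      ((∀ b ∈ B, b.card = k) ∧
      (∀ i j : Fin n, i ≠ j → blockDelta B i j = plainRange m) ∧
      (∀ i : Fin n, blockDelta B i i = 0)) := by
  unfold IsSCGDD
  rw [range_cast_eq]

/-- products of maps -/
lemma multiset_product_map {α β α' β' : Type*} (s : Multiset α) (u : Multiset β)
    (f : α → α') (g : β → β') :
    (s.map f) ×ˢ (u.map g) = (s ×ˢ u).map (Prod.map f g) := by
  simp [SProd.sprod, Multiset.product, Multiset.bind_map, Multiset.map_bind, Multiset.map_map,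
    Function.comp]

/-- `blockDelta` of a multiset of blocks mapped along the embedding `Prod.map id φ`
with `φ` an injective additive hom. -/
lemma blockDelta_map {n M M' : ℕ} (C : Multiset (Finset (Fin n × ZMod M)))
    (φ : ZMod M →+ ZMod M') (hφ : Function.Injective φ) (i j : Fin n) :
    blockDelta (C.map (fun b =>
      b.map ⟨Prod.map id φ, Function.Injective.prodMap (fun _ _ h => h) hφ⟩)) i j
      = (blockDelta C i j).map φ := by
  unfold blockDelta
  rw [Multiset.bind_map, Multiset.map_bind]
  refine Multiset.bind_congr (fun b _ => ?_)
  rw [Finset.map_val]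
  dsimp only [Function.Embedding.coeFn_mk]
  rw [multiset_product_map, Multiset.filter_map]
  have hcong : ∀ p : (Fin n × ZMod M) × (Fin n × ZMod M),
      ((fun p : (Fin n × ZMod M') × (Fin n × ZMod M') =>
        p.1.1 = i ∧ p.2.1 = j ∧ p.1 ≠ p.2) ∘ Prod.map (Prod.map id φ) (Prod.map id φ)) p ↔
      (p.1.1 = i ∧ p.2.1 = j ∧ p.1 ≠ p.2) := by
    have ginj : Function.Injective (Prod.map (id : Fin n → Fin n) φ) :=
      Function.Injective.prodMap (fun _ _ h => h) hφ
    intro p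
    simp only [Function.comp_apply, Prod.map_fst, Prod.map_snd, id_eq, ne_eq, ginj.eq_iff]
  rw [Multiset.filter_congr (fun p _ => hcong p), Multiset.map_map, Multiset.map_map]
  refine Multiset.map_congr rfl (fun p _ => ?_)
  simp [Prod.map, map_sub]

/-- If there exist a `k`-SCHGDD of type `(n, m^t)` and a `k`-SCGDD of type `m^n`, then
there exists a `k`-SCGDD of type `(mt)^n`. -/
theorem scgdd_of_schgdd_and_scgdd (k n m t : ℕ)
    (h1 : ∃ B : Multiset (Finset (Fin n × ZMod (m * t))), IsSCHGDD k n m t B)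
    (h2 : ∃ C : Multiset (Finset (Fin n × ZMod m)), IsSCGDD k n m C) :
    ∃ D : Multiset (Finset (Fin n × ZMod (m * t))), IsSCGDD k n (m * t) D := by
  obtain ⟨B, hBcard, hBoff, hBdiag⟩ := h1
  obtain ⟨C, hC⟩ := h2
  rw [isSCGDD_iff] at hC
  obtain ⟨hCcard, hCoff, hCdiag⟩ := hC
  rcases Nat.eq_zero_or_pos (m * t) with hmt | hmt
  · refine ⟨0, (isSCGDD_iff _ _ _ _).2 ⟨?_, ?_, ?_⟩⟩
    · simp
    · intro i j _; simp [blockDelta, plainRange, hmt]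
    · intro i; simp [blockDelta]
  obtain ⟨hm, ht⟩ := Nat.mul_ne_zero_iff.mp hmt.ne'
  haveI : NeZero (m * t) := ⟨hmt.ne'⟩
  haveI : NeZero m := ⟨hm⟩
  -- the additive hom `ZMod m →+ ZMod (m*t)`, `x ↦ x * t`
  set f : ℤ →+ ZMod (m * t) :=
    (AddMonoidHom.mulRight ((t : ℕ) : ZMod (m * t))).comp (Int.castAddHom (ZMod (m * t))) with hf
  have hker : f (m : ℤ) = 0 := by
    simp only [hf, AddMonoidHom.comp_apply, Int.coe_castAddHom, AddMonoidHom.mulRight_apply]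
    rw [show ((m : ℤ) : ZMod (m * t)) * ((t : ℕ) : ZMod (m * t)) = ((m * t : ℕ) : ZMod (m * t))
      by push_cast; ring, ZMod.natCast_self]
  set φ : ZMod m →+ ZMod (m * t) := ZMod.lift m ⟨f, hker⟩ with hφdef
  have hφnat : ∀ c : ℕ, φ ((c : ℕ) : ZMod m) = ((c * t : ℕ) : ZMod (m * t)) := by
    intro c
    have h1 : ((c : ℕ) : ZMod m) = ((c : ℤ) : ZMod m) := by push_cast; rfl
    rw [h1, hφdef, ZMod.lift_coe]
    simp only [hf, AddMonoidHom.comp_apply, Int.coe_castAddHom, AddMonoidHom.mulRight_apply]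
    push_cast; ring
  have hφinj : Function.Injective φ := by
    rw [injective_iff_map_eq_zero]
    intro x hx
    have hv : x = ((x.val : ℕ) : ZMod m) := (ZMod.natCast_zmod_val x).symm
    rw [hv, hφnat, ZMod.natCast_eq_zero_iff] at hx
    have hlt : x.val * t < m * t :=
      (Nat.mul_lt_mul_right (Nat.pos_of_ne_zero ht)).mpr (ZMod.val_lt x)
    have h0 : x.val * t = 0 := Nat.eq_zero_of_dvd_of_lt hx hlt
    have hx0 : x.val = 0 := by
      rcases Nat.mul_eq_zero.1 h0 with h | h
      · exact h
      · exact absurd h ht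
    rw [hv, hx0, Nat.cast_zero]
  -- the split of `Z_{mt}` into hole and non-hole differences
  have hsplit : plainRange (m * t) = nonHoleDiffs m t + holeMultiples m t := by
    have hfullnodup : (plainRange (m * t)).Nodup := by
      refine Multiset.Nodup.map_on ?_ (Multiset.nodup_range _)
      intro a ha b hb h
      rw [Multiset.mem_range] at ha hb
      have := congrArg ZMod.val h
      rwa [ZMod.val_cast_of_lt ha, ZMod.val_cast_of_lt hb] at this
    have hholenodup : (holeMultiples m t).Nodup := by
      refine Multiset.Nodup.map_on ?_ (Multiset.nodup_range _)
      intro a ha b hb h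
      rw [Multiset.mem_range] at ha hb
      have h2 := congrArg ZMod.val h
      rw [ZMod.val_cast_of_lt ((Nat.mul_lt_mul_right (Nat.pos_of_ne_zero ht)).mpr ha),
        ZMod.val_cast_of_lt ((Nat.mul_lt_mul_right (Nat.pos_of_ne_zero ht)).mpr hb)] at h2
      exact Nat.eq_of_mul_eq_mul_right (Nat.pos_of_ne_zero ht) h2
    have hmemfull : ∀ z : ZMod (m * t), z ∈ plainRange (m * t) := by
      intro z
      exact Multiset.mem_map.2 ⟨z.val, Multiset.mem_range.2 (ZMod.val_lt z),
        ZMod.natCast_zmod_val z⟩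
    have hfilter : (plainRange (m * t)).filter (fun z => z ∈ holeMultiples m t)
        = holeMultiples m t := by
      refine (Multiset.Nodup.ext (hfullnodup.filter _) hholenodup).2 (fun z => ?_)
      simp [Multiset.mem_filter, hmemfull]
    calc plainRange (m * t)
        = (plainRange (m * t)).filter (fun z => z ∉ holeMultiples m t)
          + (plainRange (m * t)).filter (fun z => ¬ z ∉ holeMultiples m t) :=
        (Multiset.filter_add_not _ _).symm
      _ = nonHoleDiffs m t + holeMultiples m t := by
        rw [Multiset.filter_congr (fun z _ => not_not), hfilter, nonHoleDiffs_eq_s14]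
  -- the new design
  refine ⟨B + C.map (fun b =>
      b.map ⟨Prod.map id φ, Function.Injective.prodMap (fun _ _ h => h) hφinj⟩),
    (isSCGDD_iff _ _ _ _).2 ⟨?_, ?_, ?_⟩⟩
  · intro b hb
    rcases Multiset.mem_add.1 hb with hb | hb
    · exact hBcard b hb
    · obtain ⟨c, hc, rfl⟩ := Multiset.mem_map.1 hb
      rw [Finset.card_map]; exact hCcard c hc
  · intro i j hij
    have hadd : ∀ (X Y : Multiset (Finset (Fin n × ZMod (m * t)))) (i' j' : Fin n),
        blockDelta (X + Y) i' j' = blockDelta X i' j' + blockDelta Y i' j' := by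
      intro X Y i' j'; simp [blockDelta, Multiset.add_bind]
    rw [hadd, blockDelta_map C φ hφinj, hBoff i j hij, hCoff i j hij, hsplit]
    congr 1
    rw [plainRange, Multiset.map_map]
    exact Multiset.map_congr rfl (fun c _ => hφnat c)
  · intro i
    have hadd : ∀ (X Y : Multiset (Finset (Fin n × ZMod (m * t)))) (i' j' : Fin n),
        blockDelta (X + Y) i' j' = blockDelta X i' j' + blockDelta Y i' j' := by
      intro X Y i' j'; simp [blockDelta, Multiset.add_bind]
    rw [hadd, blockDelta_map C φ hφinj, hBdiag i, hCdiag i]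
    simp
end

section
/- Suppose there is a 2-D (n×m, k, λ)-OOC with b codewords, and m = m₁m₂. Then there is a 2-D (nm₁ × m₂, k, λ)-OOC with m₁b codewords. -/
def oocShift {n m : ℕ} (r : ZMod m) (B : Finset (Fin n × ZMod m)) :
    Finset (Fin n × ZMod m) :=
  B.image (fun p => (p.1, p.2 + r))

def IsOOC (n m k lam : ℕ) (C : Multiset (Finset (Fin n × ZMod m))) : Prop :=
  (∀ B ∈ C, B.card = k) ∧
  (∀ B ∈ C, ∀ r : ZMod m, r ≠ 0 → (B ∩ oocShift r B).card ≤ lam) ∧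
  (∀ B ∈ C, ∀ B' ∈ C.erase B, ∀ r : ZMod m, (B ∩ oocShift r B').card ≤ lam)

section OOCaux

/-- The additive hom `ZMod m₂ →+ ZMod (m₁ * m₂)` sending `1` to `m₁`. -/
def oocDelta (m₁ m₂ : ℕ) : ZMod m₂ →+ ZMod (m₁ * m₂) :=
  ZMod.lift m₂ ⟨zmultiplesHom _ ((m₁ : ZMod (m₁ * m₂))), by
    show (m₂ : ℤ) • ((m₁ : ℕ) : ZMod (m₁ * m₂)) = 0
    have h : ((m₁ * m₂ : ℕ) : ZMod (m₁ * m₂)) = 0 := ZMod.natCast_self _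
    rw [zsmul_eq_mul]
    push_cast at h ⊢
    rw [mul_comm (m₂ : ZMod (m₁*m₂)) (m₁ : ZMod (m₁*m₂))]
    exact h⟩

theorem oocDelta_coe (m₁ m₂ : ℕ) (z : ℤ) :
    oocDelta m₁ m₂ ((z : ℤ) : ZMod m₂) = ((z * m₁ : ℤ) : ZMod (m₁ * m₂)) := by
  rw [oocDelta, ZMod.lift_coe]
  show z • ((m₁ : ℕ) : ZMod (m₁ * m₂)) = _
  rw [zsmul_eq_mul]
  push_cast
  ring

theorem oocDelta_injective (m₁ m₂ : ℕ) (h : 0 < m₁) :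
    Function.Injective (oocDelta m₁ m₂) := by
  rw [injective_iff_map_eq_zero]
  intro s hs
  obtain ⟨z, rfl⟩ := ZMod.intCast_surjective s
  rw [oocDelta_coe, ZMod.intCast_zmod_eq_zero_iff_dvd] at hs
  rw [ZMod.intCast_zmod_eq_zero_iff_dvd]
  push_cast at hs
  rw [mul_comm (m₁ : ℤ) (m₂ : ℤ)] at hs
  exact (mul_dvd_mul_iff_right (by exact_mod_cast h.ne' : (m₁ : ℤ) ≠ 0)).mp hs

/-- cast to `ZMod m₁` kills `oocDelta`. -/
theorem castHom_oocDelta (m₁ m₂ : ℕ) (s : ZMod m₂) :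
    ZMod.castHom (dvd_mul_right m₁ m₂) (ZMod m₁) (oocDelta m₁ m₂ s) = 0 := by
  obtain ⟨z, rfl⟩ := ZMod.intCast_surjective s
  rw [oocDelta_coe, map_intCast]
  push_cast
  rw [ZMod.natCast_self, mul_zero]

/-- The bijection `Fin m₁ × ZMod m₂ → ZMod (m₁ m₂)`. -/
def oocPsi (m₁ m₂ : ℕ) (x : Fin m₁ × ZMod m₂) : ZMod (m₁ * m₂) :=
  ((x.1 : ℕ) : ZMod (m₁ * m₂)) + oocDelta m₁ m₂ x.2

theorem oocPsi_bijective (m₁ m₂ : ℕ) (h : 0 < m₁) :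
    Function.Bijective (oocPsi m₁ m₂) := by
  haveI : NeZero m₁ := ⟨h.ne'⟩
  constructor
  · rintro ⟨q, s⟩ ⟨q', s'⟩ hqs
    have hcast : ((q : ℕ) : ZMod m₁) = ((q' : ℕ) : ZMod m₁) := by
      have h3 := congrArg (ZMod.castHom (dvd_mul_right m₁ m₂) (ZMod m₁)) hqs
      rw [oocPsi, oocPsi] at h3
      rw [map_add, map_add, castHom_oocDelta, castHom_oocDelta, add_zero, add_zero,
        map_natCast, map_natCast] at h3
      exact h3
    have hq : q = q' := by
      have := congrArg ZMod.val hcast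
      rw [ZMod.val_cast_of_lt q.2, ZMod.val_cast_of_lt q'.2] at this
      exact Fin.ext this
    subst hq
    have hδ : oocDelta m₁ m₂ s = oocDelta m₁ m₂ s' := by
      have := hqs
      simpa [oocPsi] using this
    exact Prod.ext rfl (oocDelta_injective m₁ m₂ h hδ)
  · intro t
    obtain ⟨z, rfl⟩ := ZMod.intCast_surjective t
    refine ⟨⟨⟨(z % m₁).toNat, ?_⟩, ((z / m₁ : ℤ) : ZMod m₂)⟩, ?_⟩
    · have h1 : (0 : ℤ) ≤ z % m₁ := Int.emod_nonneg z (by exact_mod_cast h.ne')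
      have h2 : z % m₁ < m₁ := Int.emod_lt_of_pos z (by exact_mod_cast h)
      omega
    · show ((Int.toNat (z % m₁) : ℕ) : ZMod (m₁ * m₂)) + _ = _
      rw [oocDelta_coe]
      have h1 : (0 : ℤ) ≤ z % m₁ := Int.emod_nonneg z (by exact_mod_cast h.ne')
      have h2 : ((Int.toNat (z % m₁) : ℕ) : ZMod (m₁ * m₂)) = ((z % (m₁:ℤ) : ℤ) : ZMod (m₁ * m₂)) := by
        rw [← Int.cast_natCast, Int.toNat_of_nonneg h1]
      rw [h2, ← Int.cast_add, Int.emod_add_ediv_mul z m₁]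

/-- The point relabelling map. -/
noncomputable def oocPhi (n m₁ m₂ : ℕ) (h : 0 < m₁) :
    Fin n × ZMod (m₁ * m₂) → Fin (n * m₁) × ZMod m₂ := fun p =>
  (finProdFinEquiv
      (p.1, ((Equiv.ofBijective (oocPsi m₁ m₂) (oocPsi_bijective m₁ m₂ h)).symm p.2).1),
    ((Equiv.ofBijective (oocPsi m₁ m₂) (oocPsi_bijective m₁ m₂ h)).symm p.2).2)

theorem oocPhi_injective (n m₁ m₂ : ℕ) (h : 0 < m₁) :
    Function.Injective (oocPhi n m₁ m₂ h) := by
  set e := Equiv.ofBijective (oocPsi m₁ m₂) (oocPsi_bijective m₁ m₂ h) with he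
  rintro ⟨a, t⟩ ⟨a', t'⟩ hp
  have h1 := congrArg Prod.fst hp
  have h2 := congrArg Prod.snd hp
  simp only [oocPhi] at h1 h2
  have h3 := finProdFinEquiv.injective h1
  have ha : a = a' := congrArg Prod.fst h3
  have hq : (e.symm t).1 = (e.symm t').1 := congrArg Prod.snd h3
  have ht : t = t' := e.symm.injective (Prod.ext hq h2)
  exact Prod.ext ha ht

theorem oocPhi_equivariant (n m₁ m₂ : ℕ) (h : 0 < m₁) (p : Fin n × ZMod (m₁ * m₂))
    (s : ZMod m₂) :
    oocPhi n m₁ m₂ h (p.1, p.2 + oocDelta m₁ m₂ s)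
      = ((oocPhi n m₁ m₂ h p).1, (oocPhi n m₁ m₂ h p).2 + s) := by
  set e := Equiv.ofBijective (oocPsi m₁ m₂) (oocPsi_bijective m₁ m₂ h) with he
  have key : ∀ t : ZMod (m₁ * m₂),
      e.symm (t + oocDelta m₁ m₂ s) = ((e.symm t).1, (e.symm t).2 + s) := by
    intro t
    apply e.injective
    rw [Equiv.apply_symm_apply]
    symm
    show oocPsi m₁ m₂ ((e.symm t).1, (e.symm t).2 + s) = t + oocDelta m₁ m₂ s
    rw [oocPsi]
    dsimp only
    rw [map_add, ← add_assoc]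
    have h6 : ((((e.symm t).1 : Fin m₁) : ℕ) : ZMod (m₁ * m₂)) + oocDelta m₁ m₂ (e.symm t).2 = t := by
      show oocPsi m₁ m₂ ((e.symm t).1, (e.symm t).2) = t
      exact e.apply_symm_apply t
    rw [h6]
  simp only [oocPhi, ← he, key]

theorem oocShift_injFun {n m : ℕ} (r : ZMod m) :
    Function.Injective (fun p : Fin n × ZMod m => (p.1, p.2 + r)) := by
  rintro ⟨a, t⟩ ⟨b, u⟩ hp
  have h1 := congrArg Prod.fst hp
  have h2 := congrArg Prod.snd hp
  dsimp at h1 h2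
  exact Prod.ext h1 (by exact add_right_cancel h2)

theorem oocShift_card {n m : ℕ} (r : ZMod m) (B : Finset (Fin n × ZMod m)) :
    (oocShift r B).card = B.card :=
  Finset.card_image_of_injective _ (oocShift_injFun r)

theorem oocShift_inter {n m : ℕ} (a : ZMod m) (X Z : Finset (Fin n × ZMod m)) :
    oocShift a (X ∩ Z) = oocShift a X ∩ oocShift a Z :=
  Finset.image_inter X Z (oocShift_injFun a)

theorem ooc_count_bind {α : Type*} [DecidableEq α] (m₁ : ℕ) (D : Multiset α) (x : α × ℕ)
    (hx : x.2 < m₁) :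
    (D.bind (fun B => (Multiset.range m₁).map (fun j => (B, j)))).count x = D.count x.1 := by
  induction D using Multiset.induction_on with
  | empty => simp
  | cons B D ih =>
    rw [Multiset.cons_bind, Multiset.count_add, ih, Multiset.count_cons]
    have hone : ((Multiset.range m₁).map (fun j => (B, j))).count x
        = if x = (B, x.2) then 1 else 0 := by
      by_cases hB : x = (B, x.2)
      · rw [if_pos hB, hB]
        have hinj : Function.Injective (fun j => (B, j) : ℕ → α × ℕ) := by
          intro i j hij
          exact congrArg Prod.snd hij
        rw [Multiset.count_map_eq_count' _ _ hinj]
        exact Multiset.count_eq_one_of_mem (Multiset.nodup_range m₁)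
          (Multiset.mem_range.mpr hx)
      · rw [if_neg hB, Multiset.count_eq_zero]
        intro hmem
        rw [Multiset.mem_map] at hmem
        obtain ⟨j, hj, hje⟩ := hmem
        apply hB
        rw [← hje]
    rw [hone]
    have hiff : (x = (B, x.2)) ↔ (x.1 = B) := by
      constructor
      · intro he; rw [he]
      · intro he; exact Prod.ext he rfl
    simp only [hiff]
    exact add_comm _ _

theorem oocShift_oocShift {n m : ℕ} (a c : ZMod m) (B : Finset (Fin n × ZMod m)) :
    oocShift a (oocShift c B) = oocShift (c + a) B := by
  unfold oocShift
  rw [Finset.image_image]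
  congr 1
  funext p
  show (p.1, p.2 + c + a) = (p.1, p.2 + (c + a))
  rw [add_assoc]

end OOCaux

/-- If there is a 2-D `(n × m, k, λ)`-OOC with `b` codewords and `m = m₁m₂`, then there is
a 2-D `(nm₁ × m₂, k, λ)`-OOC with `m₁b` codewords. -/
theorem ooc_factorization (n m m₁ m₂ k lam : ℕ) (hm : m = m₁ * m₂)
    (C : Multiset (Finset (Fin n × ZMod m))) (h : IsOOC n m k lam C) :
    ∃ C' : Multiset (Finset (Fin (n * m₁) × ZMod m₂)),
      IsOOC (n * m₁) m₂ k lam C' ∧ Multiset.card C' = m₁ * Multiset.card C := by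
  subst hm
  obtain ⟨hcard, hauto, hcross⟩ := h
  rcases Nat.eq_zero_or_pos m₁ with hm₁ | hm₁
  · subst hm₁
    exact ⟨0, ⟨by simp, by simp, by simp⟩, by simp⟩
  set δ := oocDelta m₁ m₂ with hδdef
  set Φ := oocPhi n m₁ m₂ hm₁ with hΦdef
  have hΦinj : Function.Injective Φ := oocPhi_injective n m₁ m₂ hm₁
  have hΦeq := oocPhi_equivariant n m₁ m₂ hm₁
  -- shifting commutes with relabelling
  have himg : ∀ (Y : Finset (Fin n × ZMod (m₁ * m₂))) (r : ZMod m₂),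
      oocShift r (Y.image Φ) = (oocShift (δ r) Y).image Φ := by
    intro Y r
    unfold oocShift
    rw [Finset.image_image, Finset.image_image]
    congr 1
    funext p
    exact (hΦeq p r).symm
  have hkey : ∀ (X Y : Finset (Fin n × ZMod (m₁ * m₂))) (a b : ZMod (m₁ * m₂)) (r : ZMod m₂),
      ((oocShift a X).image Φ ∩ oocShift r ((oocShift b Y).image Φ)).card
        = (X ∩ oocShift (b - a + δ r) Y).card := by
    intro X Y a b r
    rw [himg, oocShift_oocShift, ← Finset.image_inter _ _ hΦinj,
      Finset.card_image_of_injective _ hΦinj]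
    have h1 : oocShift (b + δ r) Y = oocShift a (oocShift (b - a + δ r) Y) := by
      rw [oocShift_oocShift]
      congr 1
      ring
    rw [h1, ← oocShift_inter, oocShift_card]
  -- the index multiset and the new code
  set T : Multiset (Finset (Fin n × ZMod (m₁ * m₂)) × ℕ) :=
    C.bind (fun B => (Multiset.range m₁).map (fun j => (B, j))) with hTdef
  set F : Finset (Fin n × ZMod (m₁ * m₂)) × ℕ → Finset (Fin (n * m₁) × ZMod m₂) :=
    fun x => (oocShift ((x.2 : ℕ) : ZMod (m₁ * m₂)) x.1).image Φ with hFdef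
  have hmemT : ∀ x ∈ T, x.1 ∈ C ∧ x.2 < m₁ := by
    intro x hx
    rw [hTdef, Multiset.mem_bind] at hx
    obtain ⟨B, hB, hx⟩ := hx
    rw [Multiset.mem_map] at hx
    obtain ⟨j, hj, hx⟩ := hx
    rw [← hx]
    exact ⟨hB, Multiset.mem_range.mp hj⟩
  have hcountT : ∀ x : Finset (Fin n × ZMod (m₁ * m₂)) × ℕ, x.2 < m₁ →
      T.count x = C.count x.1 := by
    intro x hx
    rw [hTdef]
    exact ooc_count_bind m₁ C x hx
  refine ⟨T.map F, ⟨?_, ?_, ?_⟩, ?_⟩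
  · -- cardinality of codewords
    intro B₁ hB₁
    rw [Multiset.mem_map] at hB₁
    obtain ⟨x, hxT, rfl⟩ := hB₁
    rw [hFdef]
    show ((oocShift _ x.1).image Φ).card = k
    rw [Finset.card_image_of_injective _ hΦinj, oocShift_card]
    exact hcard x.1 (hmemT x hxT).1
  · -- auto-correlation
    intro B₁ hB₁ r hr
    rw [Multiset.mem_map] at hB₁
    obtain ⟨x, hxT, rfl⟩ := hB₁
    rw [hFdef]
    show (((oocShift _ x.1).image Φ) ∩ oocShift r ((oocShift _ x.1).image Φ)).card ≤ lam
    rw [hkey]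
    have hsimp : ((x.2 : ℕ) : ZMod (m₁ * m₂)) - ((x.2 : ℕ) : ZMod (m₁ * m₂)) + δ r = δ r := by
      rw [sub_self, zero_add]
    rw [hsimp]
    refine hauto x.1 (hmemT x hxT).1 (δ r) ?_
    intro h0
    exact hr (oocDelta_injective m₁ m₂ hm₁ (by rw [← hδdef, h0, map_zero]))
  · -- cross-correlation
    intro B₁ hB₁ B₂ hB₂ r
    rw [Multiset.mem_map] at hB₁
    obtain ⟨a, haT, rfl⟩ := hB₁
    have hB₂' : B₂ ∈ (T.erase a).map F := by
      have hT : T = a ::ₘ T.erase a := (Multiset.cons_erase haT).symm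
      rw [hT, Multiset.map_cons, Multiset.erase_cons_head] at hB₂
      exact hB₂
    rw [Multiset.mem_map] at hB₂'
    obtain ⟨b, hbE, rfl⟩ := hB₂'
    have hbT := Multiset.mem_of_mem_erase hbE
    obtain ⟨haC, ha2⟩ := hmemT a haT
    obtain ⟨hbC, hb2⟩ := hmemT b hbT
    rw [hFdef]
    show (((oocShift _ a.1).image Φ) ∩ oocShift r ((oocShift _ b.1).image Φ)).card ≤ lam
    rw [hkey]
    by_cases hb1 : b.1 ∈ C.erase a.1
    · exact hcross a.1 haC b.1 hb1 _
    · have hb1a : b.1 = a.1 := by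
        by_contra hne
        exact hb1 ((Multiset.mem_erase_of_ne hne).mpr hbC)
      have hb2a : b.2 ≠ a.2 := by
        intro h22
        apply hb1
        have hba : b = a := Prod.ext hb1a h22
        subst hba
        have hc1 : 0 < Multiset.count b (T.erase b) := Multiset.count_pos.mpr hbE
        rw [Multiset.count_erase_self, hcountT b hb2] at hc1
        apply Multiset.count_pos.mp
        rw [Multiset.count_erase_self]
        omega
      rw [hb1a]
      refine hauto a.1 haC _ ?_
      intro h0
      have h4 := congrArg (ZMod.castHom (dvd_mul_right m₁ m₂) (ZMod m₁)) h0
      rw [map_add, map_sub, hδdef, castHom_oocDelta, add_zero, map_natCast, map_natCast,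
        map_zero, sub_eq_zero] at h4
      haveI : NeZero m₁ := ⟨hm₁.ne'⟩
      have h5 := congrArg ZMod.val h4
      rw [ZMod.val_cast_of_lt hb2, ZMod.val_cast_of_lt ha2] at h5
      exact hb2a h5
  · -- cardinality of the code
    rw [Multiset.card_map, hTdef, Multiset.card_bind]
    have hconst : (Multiset.card ∘ fun B : Finset (Fin n × ZMod (m₁ * m₂)) =>
        (Multiset.range m₁).map (fun j : ℕ => (B, j))) = fun _ => m₁ := by
      funext B
      simp
    rw [hconst, Multiset.map_const', Multiset.sum_replicate, smul_eq_mul, mul_comm]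
end
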